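/- arXiv:2408.10941 — 8 statements merged into one kernel-verified Lean document; each statement's English description precedes it below -/
import Mathlib

section
/- Let k_ρ, k_α, λ > 0 and let f : ℝ³ → ℝ³ be the nominal closed-loop kinematics vector field f(ρ, φ, α) = (−k_ρ cos²(α) ρ, −k_ρ sinc(2α) α, −k_α α + λ k_ρ sinc(2α) φ). Define V₁(ρ, φ, α) := ½(ρ² + λφ² + α²). Then the derivative of V₁ along f satisfies, for all (ρ, φ, α) ∈ ℝ³, ∇V₁(ρ, φ, α) · f(ρ, φ, α) = −k_ρ cos²(α) ρ² − k_α α², which is nonpositive. -/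
open Real

/-- `sinc s = sin s / s` for `s ≠ 0`, and `sinc 0 = 1`. -/
noncomputable def sinc (s : ℝ) : ℝ := if s = 0 then 1 else Real.sin s / s

/-- The derivative of the weak Lyapunov function `V₁(ρ, φ, α) = ½(ρ² + λφ² + α²)`
along the nominal closed-loop kinematics vector field
`f(ρ, φ, α) = (-k_ρ cos²(α) ρ, -k_ρ sinc(2α) α, -k_α α + λ k_ρ sinc(2α) φ)`
equals `-k_ρ cos²(α) ρ² - k_α α²`, which is nonpositive. -/
theorem weak_Lyapunov_derivative
    (kρ kα lam : ℝ) (hkρ : 0 < kρ) (hkα : 0 < kα) (hlam : 0 < lam)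
    (f : ℝ × ℝ × ℝ → ℝ × ℝ × ℝ)
    (hf : ∀ p : ℝ × ℝ × ℝ,
      f p = (-kρ * Real.cos p.2.2 ^ 2 * p.1,
             -kρ * _root_.sinc (2 * p.2.2) * p.2.2,
             -kα * p.2.2 + lam * kρ * _root_.sinc (2 * p.2.2) * p.2.1))
    (V₁ : ℝ × ℝ × ℝ → ℝ)
    (hV₁ : ∀ p : ℝ × ℝ × ℝ, V₁ p = (p.1 ^ 2 + lam * p.2.1 ^ 2 + p.2.2 ^ 2) / 2) :
    ∀ p : ℝ × ℝ × ℝ,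
      fderiv ℝ V₁ p (f p) = -kρ * Real.cos p.2.2 ^ 2 * p.1 ^ 2 - kα * p.2.2 ^ 2 ∧
      fderiv ℝ V₁ p (f p) ≤ 0 := by
  have hVeq : V₁ = fun p : ℝ × ℝ × ℝ => (p.1 ^ 2 + lam * p.2.1 ^ 2 + p.2.2 ^ 2) / 2 :=
    funext hV₁
  subst hVeq
  intro p
  have h1 : HasFDerivAt (fun q : ℝ × ℝ × ℝ => q.1)
      (ContinuousLinearMap.fst ℝ ℝ (ℝ × ℝ)) p := hasFDerivAt_fst
  have h2 : HasFDerivAt (fun q : ℝ × ℝ × ℝ => q.2.1)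
      ((ContinuousLinearMap.fst ℝ ℝ ℝ).comp (ContinuousLinearMap.snd ℝ ℝ (ℝ × ℝ))) p :=
    hasFDerivAt_fst.comp p hasFDerivAt_snd
  have h3 : HasFDerivAt (fun q : ℝ × ℝ × ℝ => q.2.2)
      ((ContinuousLinearMap.snd ℝ ℝ ℝ).comp (ContinuousLinearMap.snd ℝ ℝ (ℝ × ℝ))) p :=
    hasFDerivAt_snd.comp p hasFDerivAt_snd
  have hsq1 : HasFDerivAt (fun q : ℝ × ℝ × ℝ => q.1 ^ 2)
      ((2 * p.1 ^ 1) • (ContinuousLinearMap.fst ℝ ℝ (ℝ × ℝ))) p := by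
    have := h1.mul h1
    simpa [Pi.mul_def, pow_two, two_mul, add_smul] using this
  have hsq2 : HasFDerivAt (fun q : ℝ × ℝ × ℝ => q.2.1 ^ 2)
      ((2 * p.2.1 ^ 1) • ((ContinuousLinearMap.fst ℝ ℝ ℝ).comp (ContinuousLinearMap.snd ℝ ℝ (ℝ × ℝ)))) p := by
    have := h2.mul h2
    simpa [Pi.mul_def, pow_two, two_mul, add_smul] using this
  have hsq3 : HasFDerivAt (fun q : ℝ × ℝ × ℝ => q.2.2 ^ 2)
      ((2 * p.2.2 ^ 1) • ((ContinuousLinearMap.snd ℝ ℝ ℝ).comp (ContinuousLinearMap.snd ℝ ℝ (ℝ × ℝ)))) p := by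
    have := h3.mul h3
    simpa [Pi.mul_def, pow_two, two_mul, add_smul] using this
  have hd : HasFDerivAt (fun q : ℝ × ℝ × ℝ => (q.1 ^ 2 + lam * q.2.1 ^ 2 + q.2.2 ^ 2) / 2)
      (((1:ℝ)/2) • ((2 * p.1 ^ 1) • (ContinuousLinearMap.fst ℝ ℝ (ℝ × ℝ)) +
        lam • ((2 * p.2.1 ^ 1) • ((ContinuousLinearMap.fst ℝ ℝ ℝ).comp (ContinuousLinearMap.snd ℝ ℝ (ℝ × ℝ)))) +
        (2 * p.2.2 ^ 1) • ((ContinuousLinearMap.snd ℝ ℝ ℝ).comp (ContinuousLinearMap.snd ℝ ℝ (ℝ × ℝ))))) p := by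
    have h := ((hsq1.add (hsq2.const_mul lam)).add hsq3).mul_const ((1:ℝ)/2)
    have h2' : (fun x : ℝ × ℝ × ℝ => (x.1 ^ 2 + lam * x.2.1 ^ 2 + x.2.2 ^ 2) * (1/2)) =
        fun q : ℝ × ℝ × ℝ => (q.1 ^ 2 + lam * q.2.1 ^ 2 + q.2.2 ^ 2) / 2 := by
      funext q; ring
    simp only [Pi.add_apply] at h
    rw [h2'] at h
    exact h
  constructor
  · rw [hd.fderiv, hf p]
    simp
    ring
  · rw [hd.fderiv, hf p]
    simp only [ContinuousLinearMap.add_apply,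
      ContinuousLinearMap.smul_apply, ContinuousLinearMap.coe_fst',
      ContinuousLinearMap.coe_comp', Function.comp_apply, ContinuousLinearMap.coe_snd',
      smul_eq_mul]
    nlinarith [sq_nonneg (Real.cos p.2.2 * p.1), sq_nonneg p.2.2, hkρ.le, hkα.le]
end

section
/- Let k_ρ, k_α, λ > 0 and let f : ℝ³ → ℝ³ be the nominal closed-loop kinematics vector field f(ρ, φ, α) = (−k_ρ cos²(α) ρ, −k_ρ sinc(2α) α, −k_α α + λ k_ρ sinc(2α) φ). Then the origin is globally asymptotically stable for ẋ = f(x): (stability) for every ε > 0 there exists δ > 0 such that every differentiable χ : [0, ∞) → ℝ³ with χ'(t) = f(χ(t)) for all t ≥ 0 and ‖χ(0)‖ < δ satisfies ‖χ(t)‖ < ε for all t ≥ 0; and (global attractivity) every such solution satisfies χ(t) → 0 as t → ∞. -/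
open Real Filter

open Topology Set

lemma abs_sinc_le_one (s : ℝ) : |_root_.sinc s| ≤ 1 := by
  unfold _root_.sinc; split_ifs with h
  · simp
  · rw [abs_div, div_le_one (abs_pos.2 h)]; exact Real.abs_sin_le_abs

lemma tendsto_sinc_zero : Tendsto _root_.sinc (𝓝 0) (𝓝 1) := by
  have h1 : Tendsto _root_.sinc (𝓝[≠] (0:ℝ)) (𝓝 1) := by
    have h := hasDerivAt_iff_tendsto_slope.1 (Real.hasDerivAt_sin 0)
    rw [Real.cos_zero] at h
    refine h.congr' ?_
    filter_upwards [self_mem_nhdsWithin] with s hs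
    have hs' : s ≠ 0 := hs
    simp [slope, _root_.sinc, hs', Real.sin_zero, div_eq_inv_mul]
  have h2 : Tendsto _root_.sinc (pure (0:ℝ)) (𝓝 1) := by
    have : _root_.sinc 0 = 1 := by simp [_root_.sinc]
    simpa [this] using tendsto_pure_nhds _root_.sinc 0
  have key : 𝓝[≠] (0:ℝ) ⊔ pure 0 = 𝓝 0 := nhdsNE_sup_pure 0
  rw [← key]
  exact Tendsto.sup h1 h2

lemma antitoneOn_Ici_of_hasDerivAt {T : ℝ} {g g' : ℝ → ℝ}
    (hg : ∀ t ∈ Ici T, HasDerivAt g (g' t) t) (h0 : ∀ t ∈ Ici T, g' t ≤ 0) :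
    AntitoneOn g (Ici T) := by
  apply antitoneOn_of_hasDerivWithinAt_nonpos (convex_Ici T)
    (fun t ht => (hg t ht).continuousAt.continuousWithinAt)
  · intro t ht
    rw [interior_Ici] at ht
    exact ((hg t (mem_Ioi.1 ht).le).hasDerivWithinAt)
  · intro t ht
    rw [interior_Ici] at ht
    exact h0 t (mem_Ioi.1 ht).le

lemma monotoneOn_Ici_of_hasDerivAt {T : ℝ} {g g' : ℝ → ℝ}
    (hg : ∀ t ∈ Ici T, HasDerivAt g (g' t) t) (h0 : ∀ t ∈ Ici T, 0 ≤ g' t) :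
    MonotoneOn g (Ici T) := by
  apply monotoneOn_of_hasDerivWithinAt_nonneg (convex_Ici T)
    (fun t ht => (hg t ht).continuousAt.continuousWithinAt)
  · intro t ht
    rw [interior_Ici] at ht
    exact ((hg t (mem_Ioi.1 ht).le).hasDerivWithinAt)
  · intro t ht
    rw [interior_Ici] at ht
    exact h0 t (mem_Ioi.1 ht).le

set_option maxHeartbeats 2000000 in
lemma core (kρ kα lam : ℝ) (hkρ : 0 < kρ) (hkα : 0 < kα) (hlam : 0 < lam)
    (r p a : ℝ → ℝ)
    (hr : ∀ t, 0 ≤ t → HasDerivAt r (-kρ * Real.cos (a t) ^ 2 * r t) t)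
    (hp : ∀ t, 0 ≤ t → HasDerivAt p (-kρ * _root_.sinc (2 * a t) * a t) t)
    (ha : ∀ t, 0 ≤ t → HasDerivAt a (-kα * a t + lam * kρ * _root_.sinc (2 * a t) * p t) t) :
    (∀ t, 0 ≤ t → r t ^ 2 ≤ r 0 ^ 2 ∧
        lam * p t ^ 2 + a t ^ 2 ≤ lam * p 0 ^ 2 + a 0 ^ 2)
    ∧ Tendsto r atTop (𝓝 0) ∧ Tendsto p atTop (𝓝 0) ∧ Tendsto a atTop (𝓝 0) := by
  -- the Lyapunov function
  set V : ℝ → ℝ := fun t => lam * p t ^ 2 + a t ^ 2 with hVdef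
  have hVt : ∀ t, V t = lam * p t ^ 2 + a t ^ 2 := fun t => rfl
  have hV' : ∀ t ∈ Ici (0:ℝ), HasDerivAt V (-(2*kα) * a t ^ 2) t := by
    intro t ht
    have h1 := ((hp t ht).pow 2).const_mul lam
    have h2 := (ha t ht).pow 2
    have h3 := h1.add h2
    convert h3 using 1
    · rfl
    · rfl
    · rfl
    · rw [show (2:ℕ) - 1 = 1 from rfl]; push_cast; ring
  clear_value V
  have hVanti : AntitoneOn V (Ici 0) :=
    antitoneOn_Ici_of_hasDerivAt hV' (fun t _ => by nlinarith [sq_nonneg (a t)])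
  have hVnn : ∀ t, 0 ≤ V t := fun t => by rw [hVt]; positivity
  have hVbound : ∀ t, 0 ≤ t → V t ≤ V 0 := fun t ht => hVanti self_mem_Ici ht ht
  -- r^2 is nonincreasing
  have hR' : ∀ t ∈ Ici (0:ℝ), HasDerivAt (fun t => r t ^ 2)
      (2 * r t ^ 1 * (-kρ * Real.cos (a t) ^ 2 * r t)) t := fun t ht => (hr t ht).pow 2
  have hRanti : AntitoneOn (fun t => r t ^ 2) (Ici 0) :=
    antitoneOn_Ici_of_hasDerivAt hR'
      (fun t _ => by nlinarith [sq_nonneg (r t * Real.cos (a t))])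
  have hRbound : ∀ t, 0 ≤ t → r t ^ 2 ≤ r 0 ^ 2 := fun t ht => hRanti self_mem_Ici ht ht
  refine ⟨fun t ht => ⟨hRbound t ht, by rw [← hVt t, ← hVt 0]; exact hVbound t ht⟩, ?_⟩
  -- limit of V
  set g : ℝ → ℝ := fun t => V (max t 0) with hgdef
  have hgt : ∀ t, g t = V (max t 0) := fun t => rfl
  clear_value g
  have hganti : Antitone g := by
    intro s t hst
    rw [hgt, hgt]
    exact hVanti (le_max_right s 0) (le_max_right t 0) (max_le_max hst le_rfl)
  have hgbdd : BddBelow (range g) := ⟨0, by rintro x ⟨t, rfl⟩; rw [hgt]; exact hVnn _⟩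
  set L : ℝ := ⨅ t, g t with hLdef
  clear_value L
  have hgL : Tendsto g atTop (𝓝 L) := hLdef ▸ tendsto_atTop_ciInf hganti hgbdd
  have hVg : V =ᶠ[atTop] g := by
    filter_upwards [eventually_ge_atTop (0:ℝ)] with t ht
    rw [hgt, max_eq_left ht]
  have hVL : Tendsto V atTop (𝓝 L) := hgL.congr' hVg.symm
  have hLleV : ∀ t, 0 ≤ t → L ≤ V t := by
    intro t ht
    have h1 : L ≤ g t := hLdef ▸ ciInf_le hgbdd t
    rwa [hgt, max_eq_left ht] at h1
  have hL0 : 0 ≤ L := hLdef ▸ le_ciInf fun t => by rw [hgt]; exact hVnn _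
  -- pointwise bounds on a and p
  set B : ℝ := V 0 with hBdef
  clear_value B
  have hVbound' : ∀ t, 0 ≤ t → V t ≤ B := fun t ht => hBdef ▸ hVbound t ht
  have hB0 : 0 ≤ B := hBdef ▸ hVnn 0
  have haB : ∀ t, 0 ≤ t → |a t| ≤ Real.sqrt B := by
    intro t ht
    have h0 := hVbound' t ht
    rw [hVt] at h0
    have h1 : a t ^ 2 ≤ B := by nlinarith [sq_nonneg (p t)]
    calc |a t| = Real.sqrt (a t ^ 2) := (Real.sqrt_sq_eq_abs _).symm
    _ ≤ Real.sqrt B := Real.sqrt_le_sqrt h1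
  have hpB : ∀ t, 0 ≤ t → |p t| ≤ Real.sqrt (B / lam) := by
    intro t ht
    have h0 := hVbound' t ht
    rw [hVt] at h0
    have h1 : p t ^ 2 ≤ B / lam := by
      rw [le_div_iff₀ hlam]
      nlinarith [sq_nonneg (a t)]
    calc |p t| = Real.sqrt (p t ^ 2) := (Real.sqrt_sq_eq_abs _).symm
    _ ≤ Real.sqrt (B / lam) := Real.sqrt_le_sqrt h1
  -- bound on the derivative of a
  set M : ℝ := kα * Real.sqrt B + lam * kρ * Real.sqrt (B / lam) with hMdef
  clear_value M
  have hM0 : 0 ≤ M := by rw [hMdef]; positivity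
  have haM : ∀ t, 0 ≤ t →
      |(-kα * a t + lam * kρ * _root_.sinc (2 * a t) * p t)| ≤ M := by
    intro t ht
    have h1 := _root_.abs_sinc_le_one (2 * a t)
    have h2 := haB t ht
    have h3 := hpB t ht
    have h4 : |(-kα * a t + lam * kρ * _root_.sinc (2 * a t) * p t)|
        ≤ |(-kα * a t)| + |lam * kρ * _root_.sinc (2 * a t) * p t| := abs_add_le _ _
    have h5 : |(-kα * a t)| = kα * |a t| := by
      rw [abs_mul, abs_neg, abs_of_pos hkα]
    have h6 : |lam * kρ * _root_.sinc (2 * a t) * p t|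
        = (lam * kρ) * (|_root_.sinc (2 * a t)| * |p t|) := by
      rw [abs_mul, abs_mul, abs_of_pos (by positivity : (0:ℝ) < lam * kρ), mul_assoc]
    have h7 : (lam * kρ) * (|_root_.sinc (2 * a t)| * |p t|) ≤ (lam * kρ) * (1 * |p t|) :=
      mul_le_mul_of_nonneg_left
        (mul_le_mul_of_nonneg_right h1 (abs_nonneg _)) (by positivity)
    have h8 : kα * |a t| ≤ kα * Real.sqrt B := mul_le_mul_of_nonneg_left h2 hkα.le
    have h9 : (lam * kρ) * (1 * |p t|) ≤ (lam * kρ) * Real.sqrt (B / lam) := by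
      rw [one_mul]
      exact mul_le_mul_of_nonneg_left h3 (by positivity)
    rw [hMdef]
    calc |(-kα * a t + lam * kρ * _root_.sinc (2 * a t) * p t)|
        ≤ kα * |a t| + (lam * kρ) * (|_root_.sinc (2 * a t)| * |p t|) := by
          rw [← h5, ← h6]; exact h4
    _ ≤ kα * Real.sqrt B + lam * kρ * Real.sqrt (B / lam) := by linarith
  -- continuity of a on [0, ∞)
  have haCont : ContinuousOn a (Ici (0:ℝ)) :=
    fun t ht => (ha t ht).continuousAt.continuousWithinAt
  -- Barbalat: a → 0
  have haten : Tendsto a atTop (𝓝 0) := by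
    rw [Metric.tendsto_atTop]
    intro ε hε
    set h : ℝ := ε / (2 * (M + 1)) with hhdef
    clear_value h
    have hh0 : 0 < h := by rw [hhdef]; positivity
    set c : ℝ := 2 * kα * ((ε/2) ^ 2) * h with hcdef
    clear_value c
    have hc0 : 0 < c := by rw [hcdef]; positivity
    have hev : ∀ᶠ t in atTop, V t < L + c := hVL.eventually (gt_mem_nhds (by linarith))
    obtain ⟨T, hT⟩ := (hev.and (eventually_ge_atTop (0:ℝ))).exists_forall_of_atTop
    refine ⟨T, fun s hs => ?_⟩
    rw [Real.dist_eq, sub_zero]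
    by_contra hcon
    push_neg at hcon
    have hs0 : 0 ≤ s := (hT s hs).2
    -- a stays ≥ ε/2 in absolute value on [s, s+h]
    have hlip : ∀ u ∈ Icc s (s + h), |a u - a s| ≤ M * |u - s| := by
      intro u hu
      refine Convex.norm_image_sub_le_of_norm_hasDerivWithin_le
        (f := a) (f' := fun u => -kα * a u + lam * kρ * _root_.sinc (2 * a u) * p u)
        (fun x hx => (ha x (le_trans hs0 hx.1)).hasDerivWithinAt)
        (fun x hx => haM x (le_trans hs0 hx.1)) (convex_Icc s (s+h))
        (left_mem_Icc.2 (by linarith)) hu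
    have habig : ∀ u ∈ Icc s (s + h), (ε/2) ^ 2 ≤ a u ^ 2 := by
      intro u hu
      have h1 := hlip u hu
      have h2 : |u - s| ≤ h := by
        rw [abs_of_nonneg (by linarith [hu.1])]
        linarith [hu.2]
      have h3 : M * |u - s| ≤ ε / 2 := by
        have hMh : M * |u - s| ≤ M * h := mul_le_mul_of_nonneg_left h2 hM0
        have h4 : (M + 1) * h = ε / 2 := by
          rw [hhdef]; field_simp
        nlinarith
      have h5 : ε / 2 ≤ |a u| := by
        have h7 := abs_sub_abs_le_abs_sub (a s) (a u)
        have h6 : |a s - a u| = |a u - a s| := abs_sub_comm _ _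
        linarith
      nlinarith [sq_abs (a u), abs_nonneg (a u)]
    -- FTC on [s, s+h]
    have hVderiv : ∀ u ∈ uIcc s (s + h), HasDerivAt V (-(2*kα) * a u ^ 2) u := by
      intro u hu
      rw [uIcc_of_le (by linarith : s ≤ s + h)] at hu
      exact hV' u (le_trans hs0 hu.1)
    have hInt : IntervalIntegrable (fun u => -(2*kα) * a u ^ 2)
        MeasureTheory.volume s (s + h) := by
      apply ContinuousOn.intervalIntegrable
      rw [uIcc_of_le (by linarith : s ≤ s + h)]
      exact (continuousOn_const.mul
        (((haCont.mono (fun x hx => le_trans hs0 hx.1)).pow 2)))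
    have hFTC := intervalIntegral.integral_eq_sub_of_hasDerivAt hVderiv hInt
    have hmono : (∫ u in s..(s+h), (-(2*kα) * a u ^ 2))
        ≤ ∫ _ in s..(s+h), (-(2*kα) * (ε/2) ^ 2) := by
      apply intervalIntegral.integral_mono_on (by linarith) hInt
        (intervalIntegrable_const)
      intro u hu
      have := habig u hu
      nlinarith
    rw [hFTC, intervalIntegral.integral_const, smul_eq_mul] at hmono
    have hcalc : (s + h - s) * (-(2*kα) * (ε/2) ^ 2) = -c := by rw [hcdef]; ring
    rw [hcalc] at hmono
    have hVs : V s < L + c := (hT s hs).1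
    have hLs : L ≤ V (s + h) := hLleV _ (by linarith)
    linarith
  -- a² → 0 and p² → L/lam
  have ha2 : Tendsto (fun t => a t ^ 2) atTop (𝓝 0) := by
    have h1 := haten.mul haten
    rw [mul_zero] at h1
    exact h1.congr fun t => (pow_two (a t)).symm
  have hp2 : Tendsto (fun t => p t ^ 2) atTop (𝓝 (L / lam)) := by
    have h1 : Tendsto (fun t => (V t - a t ^ 2) / lam) atTop (𝓝 ((L - 0)/lam)) :=
      (hVL.sub ha2).div_const lam
    rw [sub_zero] at h1
    refine h1.congr fun t => ?_
    rw [hVt]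
    field_simp
    ring
  have hsinc1 : Tendsto (fun t => _root_.sinc (2 * a t)) atTop (𝓝 1) := by
    have h2 : Tendsto (fun t => 2 * a t) atTop (𝓝 0) := by
      simpa using haten.const_mul 2
    exact tendsto_sinc_zero.comp h2
  -- L = 0 via the sign argument
  have hLzero : L = 0 := by
    by_contra hL
    have hLpos : 0 < L := lt_of_le_of_ne hL0 (Ne.symm hL)
    set cq : ℝ := Real.sqrt (L / lam) with hcq
    clear_value cq
    have hcq0 : 0 < cq := hcq ▸ Real.sqrt_pos.2 (by positivity)
    have hev1 : ∀ᶠ t in atTop, (cq/2)^2 < p t ^ 2 := by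
      refine hp2.eventually (lt_mem_nhds ?_)
      have h1 : (cq/2)^2 = (L/lam)/4 := by
        rw [hcq, div_pow, Real.sq_sqrt (by positivity : (0:ℝ) ≤ L / lam)]
        norm_num
      rw [h1]
      have : (0:ℝ) < L / lam := by positivity
      linarith
    have hev2 : ∀ᶠ t in atTop, 1/2 < _root_.sinc (2 * a t) :=
      hsinc1.eventually (lt_mem_nhds (by norm_num))
    have hev3 : ∀ᶠ t in atTop, |a t| < lam * kρ * cq / (8 * kα) := by
      have h1 := (tendsto_zero_iff_abs_tendsto_zero a).1 haten
      exact h1.eventually (gt_mem_nhds (by positivity))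
    obtain ⟨T₀, hT₀⟩ :=
      ((((hev1.and hev2).and hev3).and (eventually_ge_atTop (0:ℝ)))).exists_forall_of_atTop
    have hT00 : 0 ≤ T₀ := (hT₀ T₀ le_rfl).2
    have hpbig : ∀ t, T₀ ≤ t → cq/2 ≤ |p t| := by
      intro t ht
      have h1 := (hT₀ t ht).1.1.1
      nlinarith [abs_nonneg (p t), sq_abs (p t), hcq0]
    have hpne : ∀ t, T₀ ≤ t → p t ≠ 0 := by
      intro t ht h0
      have := hpbig t ht
      rw [h0, abs_zero] at this
      linarith
    have hsign : (∀ t, T₀ ≤ t → cq/2 ≤ p t) ∨ (∀ t, T₀ ≤ t → cq/2 ≤ -p t) := by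
      by_cases hpT : 0 < p T₀
      · left
        intro t ht
        by_contra hle
        push_neg at hle
        have h2 := hpbig t ht
        have h3 : p t ≤ 0 := by
          by_contra h4
          push_neg at h4
          rw [abs_of_pos h4] at h2
          linarith
        have hcont : ContinuousOn p (Icc T₀ t) := fun u hu =>
          (hp u (le_trans hT00 hu.1)).continuousAt.continuousWithinAt
        obtain ⟨u, hu, hpu⟩ := intermediate_value_Icc' ht hcont ⟨h3, hpT.le⟩
        exact hpne u hu.1 hpu
      · right
        push_neg at hpT
        have hpT' : p T₀ < 0 := lt_of_le_of_ne hpT (hpne T₀ le_rfl)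
        intro t ht
        by_contra hle
        push_neg at hle
        have h2 := hpbig t ht
        have h3 : 0 ≤ p t := by
          by_contra h4
          push_neg at h4
          rw [abs_of_neg h4] at h2
          linarith
        have hcont : ContinuousOn p (Icc T₀ t) := fun u hu =>
          (hp u (le_trans hT00 hu.1)).continuousAt.continuousWithinAt
        obtain ⟨u, hu, hpu⟩ := intermediate_value_Icc ht hcont ⟨hpT, h3⟩
        exact hpne u hu.1 hpu
    obtain ⟨σ, hσ1, hσp⟩ : ∃ σ : ℝ, |σ| = 1 ∧ ∀ t, T₀ ≤ t → cq/2 ≤ σ * p t := by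
      rcases hsign with h | h
      · exact ⟨1, abs_one, fun t ht => by simpa using h t ht⟩
      · exact ⟨-1, by norm_num, fun t ht => by simpa [neg_mul] using h t ht⟩
    set d : ℝ := lam * kρ * cq / 8 with hd
    clear_value d
    have hd0 : 0 < d := by rw [hd]; positivity
    have hA' : ∀ t ∈ Ici T₀, HasDerivAt (fun t => σ * a t - d * t)
        (σ * (-kα * a t + lam * kρ * _root_.sinc (2 * a t) * p t) - d * 1) t := by
      intro t ht
      exact ((ha t (le_trans hT00 ht)).const_mul σ).sub ((hasDerivAt_id t).const_mul d)
    have hA'pos : ∀ t ∈ Ici T₀,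
        0 ≤ σ * (-kα * a t + lam * kρ * _root_.sinc (2 * a t) * p t) - d * 1 := by
      intro t ht
      have h1 := hσp t ht
      have h2 := (hT₀ t ht).1.1.2
      have h3 := (hT₀ t ht).1.2
      have hσa : σ * a t ≤ |a t| := by
        calc σ * a t ≤ |σ * a t| := le_abs_self _
        _ = |a t| := by rw [abs_mul, hσ1, one_mul]
      have hsincp : cq/4 ≤ _root_.sinc (2 * a t) * (σ * p t) := by nlinarith [hcq0]
      have hsincp' : lam * kρ * (cq/4) ≤ lam * kρ * (_root_.sinc (2 * a t) * (σ * p t)) :=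
        mul_le_mul_of_nonneg_left hsincp (by positivity)
      have haa : kα * |a t| ≤ lam * kρ * cq / 8 := by
        have h4 : kα * |a t| ≤ kα * (lam * kρ * cq / (8 * kα)) :=
          mul_le_mul_of_nonneg_left h3.le hkα.le
        have h5 : kα * (lam * kρ * cq / (8 * kα)) = lam * kρ * cq / 8 := by
          field_simp
        linarith
      have h6 : kα * (σ * a t) ≤ kα * |a t| := mul_le_mul_of_nonneg_left hσa hkα.le
      have hexp : σ * (-kα * a t + lam * kρ * _root_.sinc (2 * a t) * p t)
          = -(kα * (σ * a t)) + lam * kρ * (_root_.sinc (2 * a t) * (σ * p t)) := by ring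
      rw [hexp, hd]
      linarith
    have hmon := monotoneOn_Ici_of_hasDerivAt hA' hA'pos
    have hAten : Tendsto (fun t => σ * a t) atTop (𝓝 0) := by
      simpa using haten.const_mul σ
    have hlin : Tendsto (fun t => (σ * a T₀ - d * T₀) + d * t) atTop atTop := by
      apply tendsto_atTop_add_const_left
      exact (tendsto_id (α := ℝ)).const_mul_atTop hd0
    have hev4 : ∀ᶠ t in atTop, σ * a t < 1 :=
      hAten.eventually (gt_mem_nhds one_pos)
    have hev5 : ∀ᶠ t in atTop, (1:ℝ) ≤ (σ * a T₀ - d * T₀) + d * t :=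
      hlin.eventually_ge_atTop 1
    obtain ⟨t, ⟨h6, h7⟩, ht⟩ := ((hev4.and hev5).and (eventually_ge_atTop T₀)).exists
    have h8 := hmon self_mem_Ici (ht : t ∈ Ici T₀) ht
    simp only [] at h8
    linarith
  -- p → 0
  rw [hLzero] at hp2
  have hpten : Tendsto p atTop (𝓝 0) := by
    rw [tendsto_zero_iff_abs_tendsto_zero]
    have h1 : Tendsto (fun t => Real.sqrt (p t ^ 2)) atTop (𝓝 (Real.sqrt (0/lam))) :=
      (Real.continuous_sqrt.tendsto _).comp hp2
    simpa [Real.sqrt_sq_eq_abs, Function.comp_def] using h1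
  -- r → 0
  have hrten : Tendsto r atTop (𝓝 0) := by
    have hev6 : ∀ᶠ t in atTop, |a t| < 1 :=
      ((tendsto_zero_iff_abs_tendsto_zero a).1 haten).eventually (gt_mem_nhds one_pos)
    obtain ⟨T₁, hT₁⟩ := (hev6.and (eventually_ge_atTop (0:ℝ))).exists_forall_of_atTop
    have hT10 : 0 ≤ T₁ := (hT₁ T₁ le_rfl).2
    have hcos : ∀ t, T₁ ≤ t → (1:ℝ)/4 ≤ Real.cos (a t) ^ 2 := by
      intro t ht
      have h1 : |a t| < 1 := (hT₁ t ht).1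
      have h2 : 1 - a t ^ 2 / 2 ≤ Real.cos (a t) := Real.one_sub_sq_div_two_le_cos
      obtain ⟨h4, h5⟩ := abs_lt.1 h1
      have h6 : a t ^ 2 < 1 := by
        nlinarith [mul_pos (by linarith : (0:ℝ) < 1 - a t) (by linarith : (0:ℝ) < 1 + a t)]
      have h7 : (1:ℝ)/2 ≤ Real.cos (a t) := by linarith
      nlinarith [sq_nonneg (Real.cos (a t) - 1/2)]
    have hE : ∀ t ∈ Ici T₁, HasDerivAt (fun t => r t ^ 2 * Real.exp (kρ/2 * t))
        (2 * r t ^ 1 * (-kρ * Real.cos (a t)^2 * r t) * Real.exp (kρ/2 * t)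
          + r t ^ 2 * (Real.exp (kρ/2 * t) * (kρ/2))) t := by
      intro t ht
      have h1 := (hr t (le_trans hT10 ht)).pow 2
      have h2 : HasDerivAt (fun t => Real.exp (kρ/2 * t)) (Real.exp (kρ/2*t) * (kρ/2)) t := by
        have h3 := ((hasDerivAt_id t).const_mul (kρ/2)).exp
        simpa using h3
      exact h1.mul h2
    have hEneg : ∀ t ∈ Ici T₁,
        2 * r t ^ 1 * (-kρ * Real.cos (a t)^2 * r t) * Real.exp (kρ/2 * t)
          + r t ^ 2 * (Real.exp (kρ/2 * t) * (kρ/2)) ≤ 0 := by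
      intro t ht
      have h1 := hcos t ht
      have h2 := Real.exp_pos (kρ/2 * t)
      have h3 : r t ^ 2 * (1/4) ≤ r t ^ 2 * Real.cos (a t) ^ 2 :=
        mul_le_mul_of_nonneg_left h1 (sq_nonneg _)
      nlinarith [mul_le_mul_of_nonneg_right h3 h2.le]
    have hanti := antitoneOn_Ici_of_hasDerivAt hE hEneg
    have hbound : ∀ t, T₁ ≤ t → r t ^ 2
        ≤ (r T₁ ^ 2 * Real.exp (kρ/2 * T₁)) * Real.exp (-(kρ/2 * t)) := by
      intro t ht
      have h1 := hanti self_mem_Ici (ht : t ∈ Ici T₁) ht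
      simp only [] at h1
      have h2 : (0:ℝ) < Real.exp (kρ/2 * t) := Real.exp_pos _
      have h3 : Real.exp (-(kρ/2 * t)) = (Real.exp (kρ/2 * t))⁻¹ := Real.exp_neg _
      calc r t ^ 2 = (r t ^ 2 * Real.exp (kρ/2*t)) * (Real.exp (kρ/2*t))⁻¹ := by
            field_simp
      _ ≤ (r T₁ ^ 2 * Real.exp (kρ/2*T₁)) * (Real.exp (kρ/2*t))⁻¹ :=
            mul_le_mul_of_nonneg_right h1 (by positivity)
      _ = (r T₁ ^ 2 * Real.exp (kρ/2 * T₁)) * Real.exp (-(kρ/2 * t)) := by rw [h3]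
    have hexp0 : Tendsto (fun t => (r T₁ ^ 2 * Real.exp (kρ/2*T₁)) * Real.exp (-(kρ/2 * t)))
        atTop (𝓝 0) := by
      have h1 : Tendsto (fun t : ℝ => kρ/2 * t) atTop atTop :=
        (tendsto_id (α := ℝ)).const_mul_atTop (by positivity)
      have h2 : Tendsto (fun t : ℝ => Real.exp (-(kρ/2 * t))) atTop (𝓝 0) :=
        Real.tendsto_exp_neg_atTop_nhds_zero.comp h1
      simpa using h2.const_mul (r T₁ ^ 2 * Real.exp (kρ/2*T₁))
    have hr2 : Tendsto (fun t => r t ^ 2) atTop (𝓝 0) := by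
      refine tendsto_of_tendsto_of_tendsto_of_le_of_le' tendsto_const_nhds hexp0 ?_ ?_
      · exact Eventually.of_forall fun t => sq_nonneg _
      · filter_upwards [eventually_ge_atTop T₁] with t ht
        exact hbound t ht
    rw [tendsto_zero_iff_abs_tendsto_zero]
    have h1 : Tendsto (fun t => Real.sqrt (r t ^ 2)) atTop (𝓝 (Real.sqrt 0)) :=
      (Real.continuous_sqrt.tendsto _).comp hr2
    simpa [Real.sqrt_sq_eq_abs, Function.comp_def] using h1
  exact ⟨hrten, hpten, haten⟩

set_option maxHeartbeats 1000000
/-- The origin is globally asymptotically stable for the nominal closed-loop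
kinematics `ρ̇ = -k_ρ cos²(α) ρ`, `φ̇ = -k_ρ _root_.sinc(2α) α`,
`α̇ = -k_α α + λ k_ρ _root_.sinc(2α) φ`: it is Lyapunov stable and every solution
on `[0, ∞)` converges to the origin. Coordinates: `p = (ρ, φ, α) = (p 0, p 1, p 2)`. -/
theorem nominal_kinematics_GAS
    (kρ kα lam : ℝ) (hkρ : 0 < kρ) (hkα : 0 < kα) (hlam : 0 < lam)
    (f : EuclideanSpace ℝ (Fin 3) → EuclideanSpace ℝ (Fin 3))
    (hf : ∀ p : EuclideanSpace ℝ (Fin 3),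
      f p = ![-kρ * Real.cos (p 2) ^ 2 * p 0,
              -kρ * _root_.sinc (2 * p 2) * p 2,
              -kα * p 2 + lam * kρ * _root_.sinc (2 * p 2) * p 1]) :
    (∀ ε > (0 : ℝ), ∃ δ > (0 : ℝ), ∀ χ : ℝ → EuclideanSpace ℝ (Fin 3),
      (∀ t : ℝ, 0 ≤ t → HasDerivAt χ (f (χ t)) t) → ‖χ 0‖ < δ →
        ∀ t : ℝ, 0 ≤ t → ‖χ t‖ < ε) ∧
    (∀ χ : ℝ → EuclideanSpace ℝ (Fin 3),
      (∀ t : ℝ, 0 ≤ t → HasDerivAt χ (f (χ t)) t) →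
        Tendsto χ atTop (nhds 0)) := by
  have hnormeq : ∀ (χ : ℝ → EuclideanSpace ℝ (Fin 3)) (s : ℝ),
      ‖χ s‖ = Real.sqrt (χ s 0 ^ 2 + χ s 1 ^ 2 + χ s 2 ^ 2) := by
    intro χ s
    rw [EuclideanSpace.norm_eq, Fin.sum_univ_three]
    simp [Real.norm_eq_abs, sq_abs]
  have key : ∀ χ : ℝ → EuclideanSpace ℝ (Fin 3),
      (∀ t : ℝ, 0 ≤ t → HasDerivAt χ (f (χ t)) t) →
      (∀ t, 0 ≤ t → χ t 0 ^ 2 ≤ χ 0 0 ^ 2 ∧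
        lam * χ t 1 ^ 2 + χ t 2 ^ 2 ≤ lam * χ 0 1 ^ 2 + χ 0 2 ^ 2)
      ∧ Tendsto (fun t => χ t 0) atTop (𝓝 0) ∧ Tendsto (fun t => χ t 1) atTop (𝓝 0)
        ∧ Tendsto (fun t => χ t 2) atTop (𝓝 0) := by
    intro χ hχ
    have h0 : ∀ t, 0 ≤ t → HasDerivAt (fun t => χ t 0)
        (-kρ * Real.cos (χ t 2) ^ 2 * χ t 0) t := by
      intro t ht
      have h := (EuclideanSpace.proj (0 : Fin 3)).hasFDerivAt.comp_hasDerivAt t (hχ t ht)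
      have he : (EuclideanSpace.proj (0 : Fin 3)) (f (χ t))
          = -kρ * Real.cos (χ t 2) ^ 2 * χ t 0 := by
        simp [hf]
      rw [he] at h
      exact h
    have h1 : ∀ t, 0 ≤ t → HasDerivAt (fun t => χ t 1)
        (-kρ * _root_.sinc (2 * χ t 2) * χ t 2) t := by
      intro t ht
      have h := (EuclideanSpace.proj (1 : Fin 3)).hasFDerivAt.comp_hasDerivAt t (hχ t ht)
      have he : (EuclideanSpace.proj (1 : Fin 3)) (f (χ t))
          = -kρ * _root_.sinc (2 * χ t 2) * χ t 2 := by
        simp [hf]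
      rw [he] at h
      exact h
    have h2 : ∀ t, 0 ≤ t → HasDerivAt (fun t => χ t 2)
        (-kα * χ t 2 + lam * kρ * _root_.sinc (2 * χ t 2) * χ t 1) t := by
      intro t ht
      have h := (EuclideanSpace.proj (2 : Fin 3)).hasFDerivAt.comp_hasDerivAt t (hχ t ht)
      have he : (EuclideanSpace.proj (2 : Fin 3)) (f (χ t))
          = -kα * χ t 2 + lam * kρ * _root_.sinc (2 * χ t 2) * χ t 1 := by
        simp [hf]
      rw [he] at h
      exact h
    exact core kρ kα lam hkρ hkα hlam _ _ _ h0 h1 h2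
  constructor
  · intro ε hε
    have hC0 : (0:ℝ) < 1 + lam + 1/lam := by positivity
    refine ⟨ε / Real.sqrt (1 + lam + 1/lam), by positivity, ?_⟩
    intro χ hχ hδ t ht
    obtain ⟨hb, _⟩ := key χ hχ
    obtain ⟨hbr, hbv⟩ := hb t ht
    have hsq : ∀ s, ‖χ s‖ ^ 2 = χ s 0 ^ 2 + χ s 1 ^ 2 + χ s 2 ^ 2 := by
      intro s
      rw [hnormeq, Real.sq_sqrt (by positivity)]
    have hle : ‖χ t‖ ^ 2 ≤ (1 + lam + 1/lam) * ‖χ 0‖ ^ 2 := by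
      rw [hsq t, hsq 0]
      have e0 : lam * (χ t 0 ^ 2) ≤ lam * (χ 0 0 ^ 2) :=
        mul_le_mul_of_nonneg_left hbr hlam.le
      have e2 : lam * (χ t 2 ^ 2) ≤ lam * (lam * χ 0 1 ^ 2 + χ 0 2 ^ 2) := by
        refine mul_le_mul_of_nonneg_left ?_ hlam.le
        nlinarith [mul_nonneg hlam.le (sq_nonneg (χ t 1))]
      have hmul : lam * (χ t 0 ^ 2 + χ t 1 ^ 2 + χ t 2 ^ 2)
          ≤ lam * ((1 + lam + 1/lam) * (χ 0 0 ^ 2 + χ 0 1 ^ 2 + χ 0 2 ^ 2)) := by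
        have hinv : lam * (1/lam) = 1 := by field_simp
        nlinarith [e0, e2, hbv, sq_nonneg (χ 0 0), sq_nonneg (χ 0 1), sq_nonneg (χ 0 2),
          mul_nonneg hlam.le (sq_nonneg (χ 0 0)),
          mul_nonneg hlam.le (sq_nonneg (χ 0 1)),
          mul_nonneg hlam.le (sq_nonneg (χ 0 2)),
          mul_nonneg (mul_nonneg hlam.le hlam.le) (sq_nonneg (χ 0 0)),
          mul_nonneg (mul_nonneg hlam.le hlam.le) (sq_nonneg (χ 0 1)),
          mul_nonneg (mul_nonneg hlam.le hlam.le) (sq_nonneg (χ 0 2))]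
      exact le_of_mul_le_mul_left hmul hlam
    have hδ2 : ‖χ 0‖ ^ 2 < (ε / Real.sqrt (1 + lam + 1/lam)) ^ 2 :=
      pow_lt_pow_left₀ hδ (norm_nonneg _) (by norm_num)
    have hCe : (1 + lam + 1/lam) * (ε / Real.sqrt (1 + lam + 1/lam)) ^ 2 = ε ^ 2 := by
      rw [div_pow, Real.sq_sqrt hC0.le]
      field_simp
    have h4 : ‖χ t‖ ^ 2 < ε ^ 2 := by
      calc ‖χ t‖ ^ 2 ≤ (1 + lam + 1/lam) * ‖χ 0‖ ^ 2 := hle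
      _ < (1 + lam + 1/lam) * (ε / Real.sqrt (1 + lam + 1/lam)) ^ 2 :=
          mul_lt_mul_of_pos_left hδ2 hC0
      _ = ε ^ 2 := hCe
    exact lt_of_pow_lt_pow_left₀ 2 hε.le h4
  · intro χ hχ
    obtain ⟨_, hr, hp, ha⟩ := key χ hχ
    have sq0 : ∀ u : ℝ → ℝ, Tendsto u atTop (𝓝 0) →
        Tendsto (fun t => u t ^ 2) atTop (𝓝 0) := by
      intro u hu
      have h := hu.mul hu
      rw [mul_zero] at h
      exact h.congr fun t => (pow_two (u t)).symm
    have hsum : Tendsto (fun t => χ t 0 ^ 2 + χ t 1 ^ 2 + χ t 2 ^ 2) atTop (𝓝 0) := by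
      have h := ((sq0 _ hr).add (sq0 _ hp)).add (sq0 _ ha)
      simpa using h
    have hnt : Tendsto (fun t => ‖χ t‖) atTop (𝓝 0) := by
      have h := (Real.continuous_sqrt.tendsto 0).comp hsum
      rw [Real.sqrt_zero] at h
      exact h.congr fun t => (hnormeq χ t).symm
    exact tendsto_zero_iff_norm_tendsto_zero.2 hnt
end

section
/- Let k_ρ, λ > 0 and define K : ℝ² → ℝ² by K(α, φ) := (−λ k_ρ (1 − sinc(2α)) φ, k_ρ (1 − sinc(2α)) α). Then for every r > 0 there exists a constant c > 0 such that for all (α, φ) ∈ ℝ² with ‖(α, φ)‖ ≤ r, one has ‖K(α, φ)‖ ≤ c · ‖(α, φ)‖ · |α|. -/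
open Real

lemma sinc_neg (s : ℝ) : _root_.sinc (-s) = _root_.sinc s := by
  unfold _root_.sinc
  rcases eq_or_ne s 0 with h | h
  · simp [h]
  · simp [h, neg_div_neg_eq]

lemma abs_one_sub_sinc_le (s : ℝ) : |1 - _root_.sinc s| ≤ 2 * |s| := by
  have key : ∀ t : ℝ, 0 ≤ t → |1 - _root_.sinc t| ≤ 2 * t := by
    intro t ht
    rcases eq_or_lt_of_le ht with h0 | h0
    · simp [_root_.sinc, ← h0]
    · have habs : |Real.sin t| ≤ t := by
        calc |Real.sin t| ≤ |t| := Real.abs_sin_le_abs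
        _ = t := abs_of_pos h0
      have hsinc : _root_.sinc t = Real.sin t / t := by simp [_root_.sinc, ne_of_gt h0]
      rcases le_or_gt t 1 with h1 | h1
      · -- 0 < t ≤ 1 : use sin t > t - t^3/4
        have hgt : t - t ^ 3 / 4 < Real.sin t := by have := Real.sin_gt_sub_cube h0; nlinarith [pow_pos h0 3]
        have hle : Real.sin t ≤ t := by
          calc Real.sin t ≤ |Real.sin t| := le_abs_self _
          _ ≤ t := habs
        have hq : Real.sin t / t ≤ 1 := (div_le_one h0).mpr hle
        have hq2 : 1 - t ^ 2 / 4 < Real.sin t / t := by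
          rw [lt_div_iff₀ h0]; nlinarith
        rw [hsinc, abs_le]
        constructor <;> nlinarith
      · -- t > 1 : |1 - sinc t| ≤ 2 ≤ 2t
        have : |_root_.sinc t| ≤ 1 := by
          rw [hsinc, abs_div, abs_of_pos h0, div_le_one h0]
          exact habs
        calc |1 - _root_.sinc t| ≤ |(1:ℝ)| + |_root_.sinc t| := abs_sub _ _
        _ ≤ 1 + 1 := by rw [abs_one]; linarith
        _ ≤ 2 * t := by linarith
  rcases le_or_gt 0 s with h | h
  · rw [abs_of_nonneg h]; exact key s h
  · have := key (-s) (by linarith)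
    rw [_root_.sinc_neg] at this
    rw [abs_of_neg h]; linarith [this]

/-- The output-injection term
`K(α, φ) = (-λ k_ρ (1 - sinc(2α)) φ, k_ρ (1 - sinc(2α)) α)` satisfies, on every
ball of radius `r` (in the Euclidean norm), the bound `‖K(α,φ)‖ ≤ c ‖(α,φ)‖ |α|`
for some constant `c > 0`. -/
theorem output_injection_bound
    (kρ lam : ℝ) (hkρ : 0 < kρ) (hlam : 0 < lam)
    (K : ℝ → ℝ → ℝ × ℝ)
    (hK : ∀ α φ : ℝ,
      K α φ = (-lam * kρ * (1 - _root_.sinc (2 * α)) * φ, kρ * (1 - _root_.sinc (2 * α)) * α)) :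
    ∀ r > (0 : ℝ), ∃ c > (0 : ℝ), ∀ α φ : ℝ,
      Real.sqrt (α ^ 2 + φ ^ 2) ≤ r →
        Real.sqrt ((K α φ).1 ^ 2 + (K α φ).2 ^ 2)
          ≤ c * Real.sqrt (α ^ 2 + φ ^ 2) * |α| := by
  intro r hr
  set M : ℝ := max 1 lam with hM
  have hM1 : (1:ℝ) ≤ M := le_max_left _ _
  have hMl : lam ≤ M := le_max_right _ _
  have hM0 : 0 < M := lt_of_lt_of_le one_pos hM1
  refine ⟨4 * kρ * M, by positivity, ?_⟩
  intro α φ _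
  rw [hK]
  set d : ℝ := 1 - _root_.sinc (2 * α) with hd
  have hdle : |d| ≤ 4 * |α| := by
    have := abs_one_sub_sinc_le (2 * α)
    rw [abs_mul, abs_two] at this
    linarith
  have hd2 : d ^ 2 ≤ 16 * α ^ 2 := by
    have h1 : |d| ^ 2 ≤ (4 * |α|) ^ 2 := by
      apply pow_le_pow_left₀ (abs_nonneg _) hdle
    rw [sq_abs] at h1
    have : (4 * |α|) ^ 2 = 16 * α ^ 2 := by
      rw [mul_pow, sq_abs]; ring
    linarith
  have key : (-lam * kρ * d * φ) ^ 2 + (kρ * d * α) ^ 2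
      ≤ (4 * kρ * M) ^ 2 * (α ^ 2 + φ ^ 2) * α ^ 2 := by
    have hl2 : lam ^ 2 ≤ M ^ 2 := by nlinarith
    have h1M : (1:ℝ) ≤ M ^ 2 := by nlinarith
    nlinarith [sq_nonneg α, sq_nonneg φ, sq_nonneg (d * α), sq_nonneg (d * φ),
      mul_nonneg (sq_nonneg φ) (sub_nonneg.mpr hl2),
      mul_nonneg (mul_nonneg (sq_nonneg kρ) (sub_nonneg.mpr h1M)) (sq_nonneg (d*α)),
      mul_nonneg (mul_nonneg (sq_nonneg kρ) (sub_nonneg.mpr hl2)) (sq_nonneg (d*φ)),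
      mul_nonneg (mul_nonneg (sq_nonneg kρ) (mul_nonneg (sq_nonneg M) (sub_nonneg.mpr hd2))) (sq_nonneg α),
      mul_nonneg (mul_nonneg (sq_nonneg kρ) (mul_nonneg (sq_nonneg M) (sub_nonneg.mpr hd2))) (sq_nonneg φ)]
  calc Real.sqrt ((-lam * kρ * d * φ) ^ 2 + (kρ * d * α) ^ 2)
      ≤ Real.sqrt ((4 * kρ * M) ^ 2 * (α ^ 2 + φ ^ 2) * α ^ 2) := Real.sqrt_le_sqrt key
    _ = 4 * kρ * M * Real.sqrt (α ^ 2 + φ ^ 2) * |α| := by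
        rw [Real.sqrt_mul (by positivity), Real.sqrt_mul (by positivity),
          Real.sqrt_sq (by positivity), Real.sqrt_sq_eq_abs]
end

section
/- Let k_ρ, k_α, λ > 0, A = [[−k_α, λ k_ρ], [−k_ρ, 0]], and let P be a symmetric positive definite 2×2 real matrix with AᵀP + PA = −I. Let r > 0 and let c > 0 be a constant such that ‖K(α, φ)‖ ≤ c‖(α, φ)‖|α| whenever ‖(α, φ)‖ ≤ r, where K(α, φ) := (−λ k_ρ (1 − sinc(2α)) φ, k_ρ (1 − sinc(2α)) α). Then for all ξ = (α, φ) with ‖ξ‖ ≤ r, the derivative of V₂(ξ) := ξᵀPξ along ξ̇ = Aξ + K(α, φ) satisfies 2 ξᵀP(Aξ + K(α, φ)) ≤ −½‖ξ‖² + 2 c² r² λ_M(P)² α², where λ_M(P) denotes the largest eigenvalue of P. -/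
open Real Matrix

private lemma aux_Q (lM p q a x y : ℝ) (hple : p ≤ lM) (hqle : q ≤ lM)
    (hroot : (lM - p) * (lM - q) = a ^ 2) :
    0 ≤ (lM - p) * x^2 - 2*a*x*y + (lM - q) * y^2 := by
  rcases hple.lt_or_eq with h | h
  · nlinarith [sq_nonneg ((lM - p) * x - a * y), sub_pos.mpr h, sq_nonneg y]
  · have ha0 : a ^ 2 = 0 := by rw [← hroot, ← h]; ring
    have ha0' : a = 0 := by nlinarith
    rw [← h, ha0']
    nlinarith [sq_nonneg y, sub_nonneg.mpr hqle]

private lemma aux_Pxi (lM p q a α φ : ℝ) (hp0 : 0 < p) (hq0 : 0 < q)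
    (hple : p ≤ lM) (hqle : q ≤ lM)
    (hroot : (lM - p) * (lM - q) = a ^ 2) :
    (p * α + a * φ) ^ 2 + (a * α + q * φ) ^ 2 ≤ lM ^ 2 * (α ^ 2 + φ ^ 2) := by
  have hid : lM^2 * (α^2 + φ^2) - ((p * α + a * φ)^2 + (a * α + q * φ)^2)
      = (p + q) * ((lM - p) * α^2 - 2*a*α*φ + (lM - q) * φ^2)
        + (α^2 + φ^2) * ((lM - p)*(lM - q) - a^2) := by ring
  have hQ := aux_Q lM p q a α φ hple hqle hroot
  nlinarith [mul_nonneg (by positivity : (0:ℝ) ≤ p + q) hQ]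

private lemma aux_sq_le (s t : ℝ) (hs0 : 0 ≤ s) (ht0 : 0 ≤ t)
    (h : s ^ 2 ≤ t ^ 2) : s ≤ t := by
  nlinarith [sq_nonneg (s - t), sq_nonneg (s + t)]

private lemma aux_CS (u v K1 K2 s k : ℝ) (hs0 : 0 ≤ s) (hk0 : 0 ≤ k)
    (hs2 : s ^ 2 = u^2 + v^2) (hk2 : k ^ 2 = K1^2 + K2^2) :
    u * K1 + v * K2 ≤ s * k := by
  nlinarith [sq_nonneg (u * K2 - v * K1), mul_nonneg hs0 hk0,
    sq_nonneg (s * k - (u*K1 + v*K2)), sq_nonneg (s * k + (u*K1 + v*K2))]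

private lemma aux_final (n k lM c r α X : ℝ)
    (hn0 : 0 ≤ n) (hk0 : 0 ≤ k) (hlM0 : 0 < lM) (hc : 0 < c)
    (hnr : n ≤ r) (hkb : k ≤ c * n * |α|)
    (hX : X ≤ lM * n * k) :
    -(n^2) + 2 * X ≤ -(1/2) * n^2 + 2 * c^2 * r^2 * lM^2 * α^2 := by
  have h3 : lM * n * k ≤ c * lM * n^2 * |α| := by
    have h0 : 0 ≤ lM * n := mul_nonneg hlM0.le hn0
    nlinarith
  have habs : |α| ^ 2 = α ^ 2 := sq_abs α
  have habs2 : 2*c^2*lM^2*n^2*|α|^2 = 2*c^2*lM^2*n^2*α^2 := by rw [habs]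
  have hy : 2 * (c * lM * n^2 * |α|) ≤ (1/2) * n^2 + 2 * c^2 * lM^2 * n^2 * α^2 := by
    nlinarith [sq_nonneg (n - 2 * c * lM * n * |α|), habs2]
  have hlast : 2 * c^2 * lM^2 * n^2 * α^2 ≤ 2 * c^2 * r^2 * lM^2 * α^2 := by
    nlinarith [mul_self_le_mul_self hn0 hnr, sq_nonneg α, sq_nonneg (c*lM*α)]
  linarith

/-- Derivative bound for `V₂(ξ) = ξᵀPξ` along the output-injection form
`ξ̇ = Aξ + K(α, φ)` with `ξ = (α, φ)`: on the ball of radius `r`,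
`2 ξᵀP(Aξ + K) ≤ -½‖ξ‖² + 2 c² r² λ_M(P)² α²`, where `λ_M(P)` is the largest
eigenvalue of `P` and `c` is the constant of the bound `‖K(α,φ)‖ ≤ c‖(α,φ)‖|α|`. -/
theorem V2_derivative_bound
    (kρ kα lam : ℝ) (hkρ : 0 < kρ) (hkα : 0 < kα) (hlam : 0 < lam)
    (A : Matrix (Fin 2) (Fin 2) ℝ)
    (hA : A = Matrix.of ![![-kα, lam * kρ], ![-kρ, 0]])
    (P : Matrix (Fin 2) (Fin 2) ℝ)
    (hPsymm : P.IsSymm) (hPpos : P.PosDef)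
    (hLyap : Aᵀ * P + P * A = -(1 : Matrix (Fin 2) (Fin 2) ℝ))
    (lM : ℝ) (hlM : IsGreatest (spectrum ℝ P) lM)
    (K : ℝ → ℝ → ℝ × ℝ)
    (hK : ∀ α φ : ℝ,
      K α φ = (-lam * kρ * (1 - _root_.sinc (2 * α)) * φ, kρ * (1 - _root_.sinc (2 * α)) * α))
    (r c : ℝ) (hr : 0 < r) (hc : 0 < c)
    (hKbound : ∀ α φ : ℝ, Real.sqrt (α ^ 2 + φ ^ 2) ≤ r →
      Real.sqrt ((K α φ).1 ^ 2 + (K α φ).2 ^ 2)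
        ≤ c * Real.sqrt (α ^ 2 + φ ^ 2) * |α|) :
    ∀ α φ : ℝ, Real.sqrt (α ^ 2 + φ ^ 2) ≤ r →
      2 * (![α, φ] ⬝ᵥ P.mulVec (A.mulVec ![α, φ] + ![(K α φ).1, (K α φ).2]))
        ≤ -(1 / 2) * (α ^ 2 + φ ^ 2) + 2 * c ^ 2 * r ^ 2 * lM ^ 2 * α ^ 2 := by
  intro α φ hball
  set p := P 0 0 with hp
  set a := P 0 1 with ha
  set q := P 1 1 with hq
  have ha10 : P 1 0 = a := by
    conv_lhs => rw [← hPsymm]; simp [Matrix.transpose_apply]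
  -- `lM` is a root of the characteristic polynomial
  have hroot : (lM - p) * (lM - q) = a ^ 2 := by
    have h1 := hlM.1
    rw [spectrum.mem_iff] at h1
    rw [Matrix.isUnit_iff_isUnit_det] at h1
    rw [isUnit_iff_ne_zero, not_not] at h1
    rw [Matrix.det_fin_two] at h1
    simp [Matrix.algebraMap_matrix_apply, ha10] at h1
    nlinarith [h1]
  -- positivity of the diagonal
  have hp0 : 0 < p := by
    have := hPpos.dotProduct_mulVec_pos (x := ![1, 0]) (by intro h; have := congrFun h 0; simp at this)
    simpa [dotProduct, Matrix.mulVec, Fin.sum_univ_two] using this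
  have hq0 : 0 < q := by
    have := hPpos.dotProduct_mulVec_pos (x := ![0, 1]) (by intro h; have := congrFun h 1; simp at this)
    simpa [dotProduct, Matrix.mulVec, Fin.sum_univ_two] using this
  -- the other eigenvalue `p + q - lM` is also in the spectrum, hence `≤ lM`
  have hmu : p + q - lM ≤ lM := by
    apply hlM.2
    rw [spectrum.mem_iff, Matrix.isUnit_iff_isUnit_det, isUnit_iff_ne_zero, not_not,
      Matrix.det_fin_two]
    simp [Matrix.algebraMap_matrix_apply, ha10]
    nlinarith [hroot]
  have hple : p ≤ lM := by nlinarith [hroot, sq_nonneg a]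
  have hqle : q ≤ lM := by nlinarith [hroot, sq_nonneg a]
  have hlM0 : 0 < lM := lt_of_lt_of_le hp0 hple
  -- Lyapunov equation, entrywise
  have e00 := congrFun (congrFun hLyap 0) 0
  have e01 := congrFun (congrFun hLyap 0) 1
  have e11 := congrFun (congrFun hLyap 1) 1
  simp [hA, Matrix.mul_apply, Fin.sum_univ_two, Matrix.transpose_apply, ha10,
    Matrix.one_apply, Matrix.vecHead, Matrix.vecTail, ← hp, ← ha, ← hq] at e00 e01 e11
  set K1 := (K α φ).1 with hK1
  set K2 := (K α φ).2 with hK2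
  have hLHS : 2 * (![α, φ] ⬝ᵥ P.mulVec (A.mulVec ![α, φ] + ![K1, K2]))
      = -(α^2 + φ^2) + 2 * ((p*α + a*φ) * K1 + (a*α + q*φ) * K2) := by
    simp [hA, Matrix.mulVec, dotProduct, Fin.sum_univ_two, ha10, ← hp, ← ha, ← hq]
    linear_combination α^2 * e00 + 2*α*φ*e01 + φ^2*e11
  rw [hLHS]
  -- analytic estimates
  set n := Real.sqrt (α ^ 2 + φ ^ 2) with hn
  set k := Real.sqrt (K1 ^ 2 + K2 ^ 2) with hkk
  have hn0 : 0 ≤ n := Real.sqrt_nonneg _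
  have hk0 : 0 ≤ k := Real.sqrt_nonneg _
  have hn2 : n ^ 2 = α ^ 2 + φ ^ 2 := Real.sq_sqrt (by positivity)
  have hk2 : k ^ 2 = K1 ^ 2 + K2 ^ 2 := Real.sq_sqrt (by positivity)
  have hkb : k ≤ c * n * |α| := hKbound α φ hball
  set u := p * α + a * φ with hu
  set v := a * α + q * φ with hv
  have hPxi : u ^ 2 + v ^ 2 ≤ lM ^ 2 * n ^ 2 := by
    rw [hn2]; exact aux_Pxi lM p q a α φ hp0 hq0 hple hqle hroot
  have hs0 : (0:ℝ) ≤ Real.sqrt (u^2 + v^2) := Real.sqrt_nonneg _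
  have hs2 : Real.sqrt (u^2+v^2) ^ 2 = u^2 + v^2 := Real.sq_sqrt (by positivity)
  have hCS : u * K1 + v * K2 ≤ Real.sqrt (u^2+v^2) * k :=
    aux_CS u v K1 K2 _ k hs0 hk0 hs2 hk2
  have hsle : Real.sqrt (u^2+v^2) ≤ lM * n := by
    refine aux_sq_le _ _ hs0 (mul_nonneg hlM0.le hn0) ?_
    rw [hs2]; calc u^2 + v^2 ≤ lM^2 * n^2 := hPxi
      _ = (lM * n)^2 := by ring
  have hX : u * K1 + v * K2 ≤ lM * n * k :=
    hCS.trans (mul_le_mul_of_nonneg_right hsle hk0)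
  have hfin := aux_final n k lM c r α (u * K1 + v * K2) hn0 hk0 hlM0 hc hball hkb hX
  rw [hn2] at hfin
  linarith
end

section
/- Let k_ρ, k_α, λ > 0, let f(ρ, φ, α) = (−k_ρ cos²(α) ρ, −k_ρ sinc(2α) α, −k_α α + λ k_ρ sinc(2α) φ) be the nominal closed-loop kinematics, let A = [[−k_α, λ k_ρ], [−k_ρ, 0]], and let P be symmetric positive definite with AᵀP + PA = −I. Let r > 0 and c > 0 be such that ‖K(α, φ)‖ ≤ c‖(α, φ)‖|α| whenever ‖(α, φ)‖ ≤ r, where K(α, φ) := (−λ k_ρ (1 − sinc(2α)) φ, k_ρ (1 − sinc(2α)) α). Set ν := 2 c² r² λ_M(P)²/k_α and define V(ρ, φ, α) := ν · ½(ρ² + λφ² + α²) + (α, φ)ᵀP(α, φ). Then V is a strict Lyapunov function for f on the ball B_r = {(ρ, φ, α) : ‖(ρ, φ, α)‖ ≤ r}: V is positive definite, and for all (ρ, φ, α) ∈ B_r, ∇V(ρ, φ, α) · f(ρ, φ, α) ≤ −ν k_ρ cos²(α) ρ² − ½‖(α, φ)‖², so the derivative of V along f is negative definite on B_r. -/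
open Real Matrix

lemma le_of_sq_le' (x y : ℝ) (h : x ^ 2 ≤ y ^ 2) (hy : 0 ≤ y) : x ≤ y := by nlinarith
lemma young' (co l B t : ℝ) (hB : 0 ≤ B) :
    2 * (co * l * B * t) ≤ (1 / 2) * B + 2 * co ^ 2 * l ^ 2 * B * t ^ 2 := by
  nlinarith [mul_nonneg hB (sq_nonneg (2 * co * l * t - 1))]
lemma sqrtsq' (A B co t : ℝ) (hA : 0 ≤ A) (hB : 0 ≤ B) (ht : 0 ≤ t) (hco : 0 ≤ co)
    (h : Real.sqrt A ≤ co * Real.sqrt B * t) : A ≤ co ^ 2 * B * t ^ 2 := by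
  have h2 : Real.sqrt A ^ 2 ≤ (co * Real.sqrt B * t) ^ 2 :=
    pow_le_pow_left₀ (Real.sqrt_nonneg A) h 2
  rw [Real.sq_sqrt hA] at h2
  calc A ≤ (co * Real.sqrt B * t) ^ 2 := h2
    _ = co ^ 2 * B * t ^ 2 := by rw [mul_pow, mul_pow, Real.sq_sqrt hB]

lemma fderivV (ν2 lam a b2 d : ℝ) (p w : ℝ × ℝ × ℝ) :
    fderiv ℝ (fun q : ℝ × ℝ × ℝ =>
      ν2 * (q.1 * q.1 + lam * (q.2.1 * q.2.1) + q.2.2 * q.2.2)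
        + (a * (q.2.2 * q.2.2) + b2 * (q.2.2 * q.2.1) + d * (q.2.1 * q.2.1))) p w
    = ν2 * (2 * p.1 * w.1 + lam * (2 * p.2.1 * w.2.1) + 2 * p.2.2 * w.2.2)
      + (a * (2 * p.2.2 * w.2.2) + b2 * (w.2.2 * p.2.1 + p.2.2 * w.2.1)
        + d * (2 * p.2.1 * w.2.1)) := by
  have h1 : HasFDerivAt (fun q : ℝ × ℝ × ℝ => q.1)
      (ContinuousLinearMap.fst ℝ ℝ (ℝ × ℝ)) p := hasFDerivAt_fst
  have h2 : HasFDerivAt (fun q : ℝ × ℝ × ℝ => q.2.1)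
      ((ContinuousLinearMap.fst ℝ ℝ ℝ).comp (ContinuousLinearMap.snd ℝ ℝ (ℝ × ℝ))) p :=
    hasFDerivAt_fst.comp p hasFDerivAt_snd
  have h3 : HasFDerivAt (fun q : ℝ × ℝ × ℝ => q.2.2)
      ((ContinuousLinearMap.snd ℝ ℝ ℝ).comp (ContinuousLinearMap.snd ℝ ℝ (ℝ × ℝ))) p :=
    hasFDerivAt_snd.comp p hasFDerivAt_snd
  have hD := (((((h1.mul h1).add ((h2.mul h2).const_mul lam)).add (h3.mul h3)).const_mul ν2).add
      ((((h3.mul h3).const_mul a).add ((h3.mul h2).const_mul b2)).add ((h2.mul h2).const_mul d)))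
  have hD' : HasFDerivAt (fun q : ℝ × ℝ × ℝ =>
      ν2 * (q.1 * q.1 + lam * (q.2.1 * q.2.1) + q.2.2 * q.2.2)
        + (a * (q.2.2 * q.2.2) + b2 * (q.2.2 * q.2.1) + d * (q.2.1 * q.2.1))) _ p := hD
  rw [hD'.fderiv]
  simp [ContinuousLinearMap.add_apply, ContinuousLinearMap.smul_apply,
    ContinuousLinearMap.comp_apply, smul_eq_mul]
  ring

lemma quadB (a b d lM x1 x2 : ℝ) (ha : a ≤ lM) (hd : d ≤ lM)
    (hroot : (lM - a) * (lM - d) = b * b) :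
    a * x1 ^ 2 + 2 * b * x1 * x2 + d * x2 ^ 2 ≤ lM * (x1 ^ 2 + x2 ^ 2) := by
  rcases eq_or_lt_of_le ha with h | h
  · have hb : b = 0 := by
      have h2 : b * b = 0 := by rw [← hroot, h]; ring
      exact mul_self_eq_zero.mp h2
    subst hb
    nlinarith [sq_nonneg x1, sq_nonneg x2]
  · nlinarith [sq_nonneg ((lM - a) * x1 - b * x2), hroot]

lemma csB (a b d x1 x2 y1 y2 : ℝ) (hdet : 0 ≤ a * d - b * b) :
    (a * x1 * y1 + b * (x1 * y2 + x2 * y1) + d * x2 * y2) ^ 2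
      ≤ (a * x1 ^ 2 + 2 * b * x1 * x2 + d * x2 ^ 2)
        * (a * y1 ^ 2 + 2 * b * y1 * y2 + d * y2 ^ 2) := by
  nlinarith [mul_nonneg hdet (sq_nonneg (x1 * y2 - x2 * y1))]

set_option maxHeartbeats 1000000 in
/-- The function `V(ρ, φ, α) = ν ½(ρ² + λφ² + α²) + (α,φ)ᵀP(α,φ)` with
`ν = 2c²r²λ_M(P)²/k_α` is a strict Lyapunov function for the nominal
closed-loop kinematics on the ball `B_r`: it is positive definite and its
derivative along `f` satisfies
`∇V · f ≤ -ν k_ρ cos²(α) ρ² - ½‖(α,φ)‖²` on `B_r`, hence is negative definite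
on `B_r`. Coordinates: `p = (ρ, φ, α)`. -/
theorem strict_Lyapunov_kinematics
    (kρ kα lam : ℝ) (hkρ : 0 < kρ) (hkα : 0 < kα) (hlam : 0 < lam)
    (f : ℝ × ℝ × ℝ → ℝ × ℝ × ℝ)
    (hf : ∀ p : ℝ × ℝ × ℝ,
      f p = (-kρ * Real.cos p.2.2 ^ 2 * p.1,
             -kρ * _root_.sinc (2 * p.2.2) * p.2.2,
             -kα * p.2.2 + lam * kρ * _root_.sinc (2 * p.2.2) * p.2.1))
    (A : Matrix (Fin 2) (Fin 2) ℝ)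
    (hA : A = Matrix.of ![![-kα, lam * kρ], ![-kρ, 0]])
    (P : Matrix (Fin 2) (Fin 2) ℝ)
    (hPsymm : P.IsSymm) (hPpos : P.PosDef)
    (hLyap : Aᵀ * P + P * A = -(1 : Matrix (Fin 2) (Fin 2) ℝ))
    (lM : ℝ) (hlM : IsGreatest (spectrum ℝ P) lM)
    (r c : ℝ) (hr : 0 < r) (hc : 0 < c)
    (hKbound : ∀ α φ : ℝ, Real.sqrt (α ^ 2 + φ ^ 2) ≤ r →
      Real.sqrt ((-lam * kρ * (1 - _root_.sinc (2 * α)) * φ) ^ 2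
          + (kρ * (1 - _root_.sinc (2 * α)) * α) ^ 2)
        ≤ c * Real.sqrt (α ^ 2 + φ ^ 2) * |α|)
    (ν : ℝ) (hν : ν = 2 * c ^ 2 * r ^ 2 * lM ^ 2 / kα)
    (V : ℝ × ℝ × ℝ → ℝ)
    (hV : ∀ p : ℝ × ℝ × ℝ,
      V p = ν * ((p.1 ^ 2 + lam * p.2.1 ^ 2 + p.2.2 ^ 2) / 2)
        + ![p.2.2, p.2.1] ⬝ᵥ P.mulVec ![p.2.2, p.2.1]) :
    (V (0, 0, 0) = 0 ∧ ∀ p : ℝ × ℝ × ℝ, p ≠ (0, 0, 0) → 0 < V p) ∧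
    (∀ p : ℝ × ℝ × ℝ, Real.sqrt (p.1 ^ 2 + p.2.1 ^ 2 + p.2.2 ^ 2) ≤ r →
      fderiv ℝ V p (f p)
        ≤ -ν * kρ * Real.cos p.2.2 ^ 2 * p.1 ^ 2
          - (1 / 2) * (p.2.2 ^ 2 + p.2.1 ^ 2)) ∧
    (∀ p : ℝ × ℝ × ℝ, Real.sqrt (p.1 ^ 2 + p.2.1 ^ 2 + p.2.2 ^ 2) ≤ r →
      p ≠ (0, 0, 0) → fderiv ℝ V p (f p) < 0) := by
  set a := P 0 0 with ha_def
  set b := P 0 1 with hb_def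
  set d := P 1 1 with hd_def
  -- symmetry
  have hb' : P 1 0 = b := by
    simpa [Matrix.IsSymm] using congrFun (congrFun hPsymm 0) 1
  -- positivity of entries and determinant
  have hne1 : (![(1:ℝ), 0]) ≠ 0 := by intro h; have := congrFun h 0; simp at this
  have hne2 : (![(0:ℝ), 1]) ≠ 0 := by intro h; have := congrFun h 1; simp at this
  have ha : 0 < a := by
    have := hPpos.dotProduct_mulVec_pos hne1
    simpa [dotProduct, Matrix.mulVec, Fin.sum_univ_two] using this
  have hd : 0 < d := by
    have := hPpos.dotProduct_mulVec_pos hne2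
    simpa [dotProduct, Matrix.mulVec, Fin.sum_univ_two] using this
  have hdet : 0 < a * d - b * b := by
    have h := hPpos.det_pos
    rw [Matrix.det_fin_two] at h
    rw [hb'] at h
    linarith
  -- Lyapunov equation entrywise
  have hE1 := congrFun (congrFun hLyap 0) 0
  have hE2 := congrFun (congrFun hLyap 0) 1
  have hE3 := congrFun (congrFun hLyap 1) 1
  simp [hA, Matrix.mul_apply, Matrix.transpose_apply, Fin.sum_univ_two,
    Matrix.add_apply, Matrix.neg_apply, Matrix.one_apply, Matrix.vecHead, Matrix.vecTail,
    Matrix.cons_val_zero, Matrix.cons_val_one, Matrix.head_cons] at hE1 hE2 hE3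
  rw [hb'] at hE1 hE3
  -- spectrum facts
  have hchar : ∀ μ : ℝ, μ ∈ spectrum ℝ P → (μ - a) * (μ - d) = b * b := by
    intro μ h
    rw [spectrum.mem_iff, Matrix.isUnit_iff_isUnit_det, isUnit_iff_ne_zero, not_not,
      Matrix.det_fin_two] at h
    simp [Matrix.algebraMap_matrix_apply] at h
    rw [hb'] at h
    linarith
  have hmem : ∀ μ : ℝ, (μ - a) * (μ - d) = b * b → μ ∈ spectrum ℝ P := by
    intro μ h
    rw [spectrum.mem_iff]
    intro hU
    rw [Matrix.isUnit_iff_isUnit_det, isUnit_iff_ne_zero] at hU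
    apply hU
    rw [Matrix.det_fin_two]
    simp [Matrix.algebraMap_matrix_apply]
    rw [hb']
    linarith
  have hsq : Real.sqrt ((a - d) ^ 2 + 4 * b ^ 2) ^ 2 = (a - d) ^ 2 + 4 * b ^ 2 :=
    Real.sq_sqrt (by positivity)
  have hsnn : 0 ≤ Real.sqrt ((a - d) ^ 2 + 4 * b ^ 2) := Real.sqrt_nonneg _
  have hμp_mem : ((a + d) + Real.sqrt ((a - d) ^ 2 + 4 * b ^ 2)) / 2 ∈ spectrum ℝ P := by
    apply hmem
    linear_combination (1 / 4 : ℝ) * hsq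
  have hμp_le := hlM.2 hμp_mem
  have habs : |a - d| ≤ Real.sqrt ((a - d) ^ 2 + 4 * b ^ 2) := by
    rw [← Real.sqrt_sq_eq_abs]
    exact Real.sqrt_le_sqrt (by nlinarith [sq_nonneg b])
  have halM : a ≤ lM := by
    have h1 : a - d ≤ |a - d| := le_abs_self _
    linarith
  have hdlM : d ≤ lM := by
    have h1 : d - a ≤ |a - d| := by rw [abs_sub_comm]; exact le_abs_self _
    linarith
  have hlMpos : 0 < lM := lt_of_lt_of_le ha halM
  have hroot : (lM - a) * (lM - d) = b * b := hchar lM hlM.1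
  have hνpos : 0 < ν := by rw [hν]; positivity
  -- rewrite V in polynomial form
  have hVeq : V = fun q : ℝ × ℝ × ℝ =>
      (ν / 2) * (q.1 * q.1 + lam * (q.2.1 * q.2.1) + q.2.2 * q.2.2)
        + (a * (q.2.2 * q.2.2) + (2 * b) * (q.2.2 * q.2.1) + d * (q.2.1 * q.2.1)) := by
    funext q
    rw [hV q]
    simp [dotProduct, Matrix.mulVec, Fin.sum_univ_two, hb']
    ring
  -- the derivative bound
  have hderiv : ∀ p : ℝ × ℝ × ℝ, Real.sqrt (p.1 ^ 2 + p.2.1 ^ 2 + p.2.2 ^ 2) ≤ r →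
      fderiv ℝ V p (f p)
        ≤ -ν * kρ * Real.cos p.2.2 ^ 2 * p.1 ^ 2
          - (1 / 2) * (p.2.2 ^ 2 + p.2.1 ^ 2) := by
    intro p hp
    obtain ⟨ρ, φ, α⟩ := p
    simp only at hp ⊢
    rw [hVeq, fderivV, hf ⟨ρ, φ, α⟩]
    dsimp only
    set s := _root_.sinc (2 * α) with hs_def
    set K1 := -lam * kρ * (1 - s) * φ with hK1_def
    set K2 := kρ * (1 - s) * α with hK2_def
    set S := a * α * K1 + b * (α * K2 + φ * K1) + d * φ * K2 with hS_def
    clear_value S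
    -- ball bounds
    have hsum_nn : (0:ℝ) ≤ ρ ^ 2 + φ ^ 2 + α ^ 2 := by positivity
    have hx2r : α ^ 2 + φ ^ 2 ≤ r ^ 2 := by
      nlinarith only [Real.sq_sqrt hsum_nn, Real.sqrt_nonneg (ρ ^ 2 + φ ^ 2 + α ^ 2), hp,
        hr.le]
    have hxr : Real.sqrt (α ^ 2 + φ ^ 2) ≤ r := by
      have h1 : Real.sqrt (α ^ 2 + φ ^ 2) ≤ Real.sqrt (r ^ 2) :=
        Real.sqrt_le_sqrt (by linarith)
      rwa [Real.sqrt_sq hr.le] at h1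
    have hK := hKbound α φ hxr
    have hKsq : K1 ^ 2 + K2 ^ 2 ≤ c ^ 2 * (α ^ 2 + φ ^ 2) * α ^ 2 := by
      have := sqrtsq' (K1 ^ 2 + K2 ^ 2) (α ^ 2 + φ ^ 2) c |α| (by positivity) (by positivity)
        (abs_nonneg α) hc.le (by rw [hK1_def, hK2_def, hs_def]; exact hK)
      rwa [sq_abs] at this
    -- quadratic form bounds
    have hQx := quadB a b d lM α φ halM hdlM hroot
    have hQK := quadB a b d lM K1 K2 halM hdlM hroot
    have hQx0 : 0 ≤ a * α ^ 2 + 2 * b * α * φ + d * φ ^ 2 := by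
      nlinarith only [sq_nonneg (a * α + b * φ), hdet, ha, sq_nonneg φ]
    have hQK0 : 0 ≤ a * K1 ^ 2 + 2 * b * K1 * K2 + d * K2 ^ 2 := by
      nlinarith only [sq_nonneg (a * K1 + b * K2), hdet, ha, sq_nonneg K2]
    have hCS := csB a b d α φ K1 K2 hdet.le
    have hB : (0:ℝ) ≤ c * lM * (α ^ 2 + φ ^ 2) * |α| := by positivity
    have hS2 : S ^ 2 ≤ (c * lM * (α ^ 2 + φ ^ 2) * |α|) ^ 2 := by
      have hx2 : (0:ℝ) ≤ α ^ 2 + φ ^ 2 := by positivity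
      have hK2nn : (0:ℝ) ≤ K1 ^ 2 + K2 ^ 2 := by positivity
      calc S ^ 2 ≤ (a * α ^ 2 + 2 * b * α * φ + d * φ ^ 2)
            * (a * K1 ^ 2 + 2 * b * K1 * K2 + d * K2 ^ 2) := by rw [hS_def]; exact hCS
        _ ≤ (lM * (α ^ 2 + φ ^ 2)) * (lM * (K1 ^ 2 + K2 ^ 2)) := by
            apply mul_le_mul hQx hQK hQK0 (by positivity)
        _ ≤ (lM * (α ^ 2 + φ ^ 2)) * (lM * (c ^ 2 * (α ^ 2 + φ ^ 2) * α ^ 2)) := by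
            apply mul_le_mul_of_nonneg_left _ (by positivity)
            exact mul_le_mul_of_nonneg_left hKsq hlMpos.le
        _ = (c * lM * (α ^ 2 + φ ^ 2) * |α|) ^ 2 := by
            rw [mul_pow, mul_pow, mul_pow, sq_abs]; ring
    have hSle : S ≤ c * lM * (α ^ 2 + φ ^ 2) * |α| := le_of_sq_le' _ _ hS2 hB
    have hYoung : 2 * (c * lM * (α ^ 2 + φ ^ 2) * |α|)
        ≤ (1 / 2) * (α ^ 2 + φ ^ 2) + 2 * c ^ 2 * lM ^ 2 * (α ^ 2 + φ ^ 2) * α ^ 2 := by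
      have := young' c lM (α ^ 2 + φ ^ 2) |α| (by positivity)
      rwa [sq_abs] at this
    have hνkα : ν * kα = 2 * c ^ 2 * r ^ 2 * lM ^ 2 := by
      rw [hν]; field_simp
    have htail : 2 * c ^ 2 * lM ^ 2 * (α ^ 2 + φ ^ 2) * α ^ 2 ≤ ν * kα * α ^ 2 := by
      rw [hνkα]
      have h1 : (0:ℝ) ≤ 2 * c ^ 2 * lM ^ 2 * α ^ 2 := by positivity
      calc 2 * c ^ 2 * lM ^ 2 * (α ^ 2 + φ ^ 2) * α ^ 2
          = (2 * c ^ 2 * lM ^ 2 * α ^ 2) * (α ^ 2 + φ ^ 2) := by ring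
        _ ≤ (2 * c ^ 2 * lM ^ 2 * α ^ 2) * r ^ 2 := mul_le_mul_of_nonneg_left hx2r h1
        _ = 2 * c ^ 2 * r ^ 2 * lM ^ 2 * α ^ 2 := by ring
    -- the key algebraic identity for the derivative
    have hDeq :
        ν / 2 * (2 * ρ * (-kρ * Real.cos α ^ 2 * ρ) + lam * (2 * φ * (-kρ * s * α))
            + 2 * α * (-kα * α + lam * kρ * s * φ))
          + (a * (2 * α * (-kα * α + lam * kρ * s * φ))
            + 2 * b * ((-kα * α + lam * kρ * s * φ) * φ + α * (-kρ * s * α))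
            + d * (2 * φ * (-kρ * s * α)))
        = -ν * kρ * Real.cos α ^ 2 * ρ ^ 2 - ν * kα * α ^ 2 - (α ^ 2 + φ ^ 2) + 2 * S := by
      rw [hS_def, hK1_def, hK2_def]
      linear_combination (α ^ 2) * hE1 + (2 * α * φ) * hE2 + (φ ^ 2) * hE3
    have h2S : 2 * S ≤ (1 / 2) * (α ^ 2 + φ ^ 2) + ν * kα * α ^ 2 := by
      linarith only [hSle, hYoung, htail]
    refine le_trans (le_of_eq hDeq) ?_
    linarith only [h2S]
  refine ⟨⟨?_, ?_⟩, hderiv, ?_⟩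
  · rw [hVeq]; norm_num
  · intro p hp
    obtain ⟨ρ, φ, α⟩ := p
    have hp' : ¬(ρ = 0 ∧ φ = 0 ∧ α = 0) := by
      intro ⟨h1, h2, h3⟩; exact hp (by simp [h1, h2, h3])
    rw [hVeq]
    simp only
    have hQx0 : 0 ≤ a * (α * α) + 2 * b * (α * φ) + d * (φ * φ) := by
      nlinarith [sq_nonneg (a * α + b * φ), hdet, ha, sq_nonneg φ]
    have hpos : 0 < ρ * ρ + lam * (φ * φ) + α * α := by
      rcases not_and_or.mp hp' with h | h
      · nlinarith [mul_self_pos.mpr h, mul_nonneg hlam.le (mul_self_nonneg φ),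
          mul_self_nonneg α]
      · rcases not_and_or.mp h with h2 | h2
        · nlinarith [mul_pos hlam (mul_self_pos.mpr h2), mul_self_nonneg ρ,
            mul_self_nonneg α]
        · nlinarith [mul_self_pos.mpr h2, mul_nonneg hlam.le (mul_self_nonneg φ),
            mul_self_nonneg ρ]
    nlinarith only [mul_pos (half_pos hνpos) hpos, hQx0]
  · intro p hp hne
    have h := hderiv p hp
    obtain ⟨ρ, φ, α⟩ := p
    have hp' : ¬(ρ = 0 ∧ φ = 0 ∧ α = 0) := by
      intro ⟨h1, h2, h3⟩; exact hne (by simp [h1, h2, h3])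
    simp only at h ⊢
    rcases not_and_or.mp hp' with h1 | h1
    · have hρ : 0 < ρ ^ 2 := by positivity
      have hcos : (0:ℝ) < Real.cos α ^ 2 ∨ True := Or.inr trivial
      by_cases hca : Real.cos α = 0
      · -- then α ≠ 0 since cos 0 = 1
        have hα : α ≠ 0 := by
          intro h0; rw [h0] at hca; simp at hca
        have : 0 < α ^ 2 := by positivity
        nlinarith only [h, this, sq_nonneg φ,
          mul_nonneg (mul_nonneg hνpos.le hkρ.le)
            (mul_nonneg (sq_nonneg (Real.cos α)) (sq_nonneg ρ))]
      · have : 0 < Real.cos α ^ 2 := by positivity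
        nlinarith only [h, sq_nonneg φ, sq_nonneg α,
          mul_pos (mul_pos hνpos hkρ) (mul_pos this hρ)]
    · rcases not_and_or.mp h1 with h2 | h2
      · have : 0 < φ ^ 2 := by positivity
        nlinarith only [h, this, sq_nonneg α,
          mul_nonneg (mul_nonneg hνpos.le hkρ.le)
            (mul_nonneg (sq_nonneg (Real.cos α)) (sq_nonneg ρ))]
      · have : 0 < α ^ 2 := by positivity
        nlinarith only [h, this, sq_nonneg φ,
          mul_nonneg (mul_nonneg hνpos.le hkρ.le)
            (mul_nonneg (sq_nonneg (Real.cos α)) (sq_nonneg ρ))]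
end

section
/- Let k_ρ, k_α, k_z, k_ω, λ > 0 and r > 0. Let V : ℝ³ → ℝ be a positive definite continuously differentiable function of (ρ, φ, α) of the form V = ν·½(ρ² + λφ² + α²) + (α, φ)ᵀP(α, φ) (P symmetric positive definite, ν > 0) satisfying ∇V · f ≤ −ν k_ρ cos²(α) ρ² − ½(α² + φ²) on B_r = {‖(ρ, φ, α)‖ ≤ r}, where f is the nominal closed-loop kinematics f(ρ, φ, α) = (−k_ρ cos²(α) ρ, −k_ρ sinc(2α) α, −k_α α + λ k_ρ sinc(2α) φ). Let F : ℝ⁵ → ℝ⁵ be the full closed-loop vector field F(ρ, φ, α, z, ω̃) = (−k_ρ cos²(α) ρ + ρ cos(α) z, −k_ρ sinc(2α) α + sin(α) z, −k_α α + λ k_ρ sinc(2α) φ − sin(α) z + ω̃, −k_z z, −k_ω ω̃). Then there exists μ̄ > 0 such that for every μ ∈ (0, μ̄], the function 𝒱_r(ρ, φ, α, z, ω̃) := μ ln(V(ρ, φ, α) + 1) + ½(z²/k_z + ω̃²/k_ω) is a strict Lyapunov function for F on B_r × ℝ²: 𝒱_r is positive definite and ∇𝒱_r(χ) · F(χ)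 < 0 for every nonzero χ = (ρ, φ, α, z, ω̃) with (ρ, φ, α) ∈ B_r. -/
set_option maxHeartbeats 1000000

open Real Matrix

lemma sq_pos' {x : ℝ} (hx : x ≠ 0) : 0 < x ^ 2 := by positivity

lemma fderiv_quad_apply (C1 C2 C3 C4 : ℝ) (q v : ℝ × ℝ × ℝ) :
    fderiv ℝ (fun q : ℝ × ℝ × ℝ =>
      C1 * (q.1 * q.1) + C2 * (q.2.1 * q.2.1) + C3 * (q.2.2 * q.2.2)
        + C4 * (q.2.2 * q.2.1)) q v
    = 2 * C1 * q.1 * v.1 + (2 * C2 * q.2.1 + C4 * q.2.2) * v.2.1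
      + (2 * C3 * q.2.2 + C4 * q.2.1) * v.2.2 := by
  have h1 : HasFDerivAt (fun q : ℝ × ℝ × ℝ => q.1)
      (ContinuousLinearMap.fst ℝ ℝ (ℝ × ℝ)) q :=
    (ContinuousLinearMap.fst ℝ ℝ (ℝ × ℝ)).hasFDerivAt
  have h2 : HasFDerivAt (fun q : ℝ × ℝ × ℝ => q.2.1)
      ((ContinuousLinearMap.fst ℝ ℝ ℝ).comp (ContinuousLinearMap.snd ℝ ℝ (ℝ × ℝ))) q :=
    ((ContinuousLinearMap.fst ℝ ℝ ℝ).comp (ContinuousLinearMap.snd ℝ ℝ (ℝ × ℝ))).hasFDerivAt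
  have h3 : HasFDerivAt (fun q : ℝ × ℝ × ℝ => q.2.2)
      ((ContinuousLinearMap.snd ℝ ℝ ℝ).comp (ContinuousLinearMap.snd ℝ ℝ (ℝ × ℝ))) q :=
    ((ContinuousLinearMap.snd ℝ ℝ ℝ).comp (ContinuousLinearMap.snd ℝ ℝ (ℝ × ℝ))).hasFDerivAt
  have H : HasFDerivAt (fun q : ℝ × ℝ × ℝ =>
      C1 * (q.1 * q.1) + C2 * (q.2.1 * q.2.1) + C3 * (q.2.2 * q.2.2)
        + C4 * (q.2.2 * q.2.1)) _ q :=
    ((((h1.mul h1).const_mul C1).add ((h2.mul h2).const_mul C2)).add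
      ((h3.mul h3).const_mul C3)).add ((h3.mul h2).const_mul C4)
  rw [H.fderiv]
  simp [ContinuousLinearMap.add_apply, ContinuousLinearMap.smul_apply,
    ContinuousLinearMap.coe_comp', Function.comp, ContinuousLinearMap.coe_fst',
    ContinuousLinearMap.coe_snd', smul_eq_mul]
  ring

lemma fderiv_lyap_apply (μ c5 c6 : ℝ) (V : ℝ × ℝ × ℝ → ℝ) (p u : ℝ × ℝ × ℝ × ℝ × ℝ)
    (hVd : DifferentiableAt ℝ V (p.1, p.2.1, p.2.2.1))
    (hne : V (p.1, p.2.1, p.2.2.1) + 1 ≠ 0) :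
    fderiv ℝ (fun p : ℝ × ℝ × ℝ × ℝ × ℝ =>
        μ * Real.log (V (p.1, p.2.1, p.2.2.1) + 1)
          + (c5 * (p.2.2.2.1 * p.2.2.2.1) + c6 * (p.2.2.2.2 * p.2.2.2.2))) p u
      = μ * ((V (p.1, p.2.1, p.2.2.1) + 1)⁻¹
          * fderiv ℝ V (p.1, p.2.1, p.2.2.1) (u.1, u.2.1, u.2.2.1))
        + (c5 * (2 * p.2.2.2.1 * u.2.2.2.1) + c6 * (2 * p.2.2.2.2 * u.2.2.2.2)) := by
  set J : (ℝ × ℝ × ℝ × ℝ × ℝ) →L[ℝ] (ℝ × ℝ × ℝ) :=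
    (ContinuousLinearMap.fst ℝ ℝ (ℝ × ℝ × ℝ × ℝ)).prod
      ((((ContinuousLinearMap.fst ℝ ℝ (ℝ × ℝ × ℝ)).comp
          (ContinuousLinearMap.snd ℝ ℝ (ℝ × ℝ × ℝ × ℝ)))).prod
        (((ContinuousLinearMap.fst ℝ ℝ (ℝ × ℝ)).comp
          ((ContinuousLinearMap.snd ℝ ℝ (ℝ × ℝ × ℝ)).comp
            (ContinuousLinearMap.snd ℝ ℝ (ℝ × ℝ × ℝ × ℝ)))))) with hJ
  have hJ' : HasFDerivAt (fun p : ℝ × ℝ × ℝ × ℝ × ℝ => ((p.1, p.2.1, p.2.2.1) : ℝ × ℝ × ℝ)) J p :=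
    J.hasFDerivAt
  have hVJ : HasFDerivAt (fun p : ℝ × ℝ × ℝ × ℝ × ℝ => V (p.1, p.2.1, p.2.2.1))
      ((fderiv ℝ V (p.1, p.2.1, p.2.2.1)).comp J) p :=
    HasFDerivAt.comp p hVd.hasFDerivAt hJ'
  have hlog : HasFDerivAt (fun p : ℝ × ℝ × ℝ × ℝ × ℝ => Real.log (V (p.1, p.2.1, p.2.2.1) + 1))
      ((V (p.1, p.2.1, p.2.2.1) + 1)⁻¹ • ((fderiv ℝ V (p.1, p.2.1, p.2.2.1)).comp J)) p :=
    (Real.hasDerivAt_log hne).comp_hasFDerivAt (f := fun p : ℝ × ℝ × ℝ × ℝ × ℝ => V (p.1, p.2.1, p.2.2.1) + 1) p (hVJ.add_const 1)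
  have h4 : HasFDerivAt (fun p : ℝ × ℝ × ℝ × ℝ × ℝ => p.2.2.2.1)
      ((ContinuousLinearMap.fst ℝ ℝ ℝ).comp
        ((ContinuousLinearMap.snd ℝ ℝ (ℝ × ℝ)).comp
          ((ContinuousLinearMap.snd ℝ ℝ (ℝ × ℝ × ℝ)).comp
            (ContinuousLinearMap.snd ℝ ℝ (ℝ × ℝ × ℝ × ℝ))))) p :=
    ((ContinuousLinearMap.fst ℝ ℝ ℝ).comp
        ((ContinuousLinearMap.snd ℝ ℝ (ℝ × ℝ)).comp
          ((ContinuousLinearMap.snd ℝ ℝ (ℝ × ℝ × ℝ)).comp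
            (ContinuousLinearMap.snd ℝ ℝ (ℝ × ℝ × ℝ × ℝ))))).hasFDerivAt
  have h5 : HasFDerivAt (fun p : ℝ × ℝ × ℝ × ℝ × ℝ => p.2.2.2.2)
      ((ContinuousLinearMap.snd ℝ ℝ ℝ).comp
        ((ContinuousLinearMap.snd ℝ ℝ (ℝ × ℝ)).comp
          ((ContinuousLinearMap.snd ℝ ℝ (ℝ × ℝ × ℝ)).comp
            (ContinuousLinearMap.snd ℝ ℝ (ℝ × ℝ × ℝ × ℝ))))) p :=
    ((ContinuousLinearMap.snd ℝ ℝ ℝ).comp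
        ((ContinuousLinearMap.snd ℝ ℝ (ℝ × ℝ)).comp
          ((ContinuousLinearMap.snd ℝ ℝ (ℝ × ℝ × ℝ)).comp
            (ContinuousLinearMap.snd ℝ ℝ (ℝ × ℝ × ℝ × ℝ))))).hasFDerivAt
  have H : HasFDerivAt (fun p : ℝ × ℝ × ℝ × ℝ × ℝ =>
      μ * Real.log (V (p.1, p.2.1, p.2.2.1) + 1)
        + (c5 * (p.2.2.2.1 * p.2.2.2.1) + c6 * (p.2.2.2.2 * p.2.2.2.2))) _ p :=
    (hlog.const_mul μ).add (((h4.mul h4).const_mul c5).add ((h5.mul h5).const_mul c6))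
  rw [H.fderiv]
  simp [ContinuousLinearMap.add_apply, ContinuousLinearMap.smul_apply,
    ContinuousLinearMap.coe_comp', Function.comp, ContinuousLinearMap.coe_fst',
    ContinuousLinearMap.coe_snd', ContinuousLinearMap.prod_apply, smul_eq_mul, hJ]
  ring

/-- There exists `μ̄ > 0` such that for every `μ ∈ (0, μ̄]`, the function
`𝒱_r(ρ,φ,α,z,ω̃) = μ ln(V(ρ,φ,α) + 1) + ½(z²/k_z + ω̃²/k_ω)` is a strict
Lyapunov function on `B_r × ℝ²` for the full closed-loop cascaded system.
Coordinates: `p = (ρ, φ, α, z, ω̃)`. -/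
theorem strict_Lyapunov_cascade
    (kρ kα kz kω lam : ℝ)
    (hkρ : 0 < kρ) (hkα : 0 < kα) (hkz : 0 < kz) (hkω : 0 < kω) (hlam : 0 < lam)
    (r : ℝ) (hr : 0 < r)
    (ν : ℝ) (hν : 0 < ν)
    (P : Matrix (Fin 2) (Fin 2) ℝ) (hPsymm : P.IsSymm) (hPpos : P.PosDef)
    (V : ℝ × ℝ × ℝ → ℝ)
    (hVform : ∀ q : ℝ × ℝ × ℝ,
      V q = ν * ((q.1 ^ 2 + lam * q.2.1 ^ 2 + q.2.2 ^ 2) / 2)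
        + ![q.2.2, q.2.1] ⬝ᵥ P.mulVec ![q.2.2, q.2.1])
    (hVC1 : ContDiff ℝ 1 V)
    (hVpos : V (0, 0, 0) = 0 ∧ ∀ q : ℝ × ℝ × ℝ, q ≠ (0, 0, 0) → 0 < V q)
    (f : ℝ × ℝ × ℝ → ℝ × ℝ × ℝ)
    (hf : ∀ q : ℝ × ℝ × ℝ,
      f q = (-kρ * Real.cos q.2.2 ^ 2 * q.1,
             -kρ * _root_.sinc (2 * q.2.2) * q.2.2,
             -kα * q.2.2 + lam * kρ * _root_.sinc (2 * q.2.2) * q.2.1))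
    (hVderiv : ∀ q : ℝ × ℝ × ℝ, Real.sqrt (q.1 ^ 2 + q.2.1 ^ 2 + q.2.2 ^ 2) ≤ r →
      fderiv ℝ V q (f q)
        ≤ -ν * kρ * Real.cos q.2.2 ^ 2 * q.1 ^ 2 - (q.2.2 ^ 2 + q.2.1 ^ 2) / 2)
    (F : ℝ × ℝ × ℝ × ℝ × ℝ → ℝ × ℝ × ℝ × ℝ × ℝ)
    (hF : ∀ p : ℝ × ℝ × ℝ × ℝ × ℝ,
      F p = (-kρ * Real.cos p.2.2.1 ^ 2 * p.1 + p.1 * Real.cos p.2.2.1 * p.2.2.2.1,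
             -kρ * _root_.sinc (2 * p.2.2.1) * p.2.2.1 + Real.sin p.2.2.1 * p.2.2.2.1,
             -kα * p.2.2.1 + lam * kρ * _root_.sinc (2 * p.2.2.1) * p.2.1
               - Real.sin p.2.2.1 * p.2.2.2.1 + p.2.2.2.2,
             -kz * p.2.2.2.1,
             -kω * p.2.2.2.2)) :
    ∃ μbar > (0 : ℝ), ∀ μ : ℝ, 0 < μ → μ ≤ μbar →
      ∀ 𝒱 : ℝ × ℝ × ℝ × ℝ × ℝ → ℝ,
        (∀ p : ℝ × ℝ × ℝ × ℝ × ℝ,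
          𝒱 p = μ * Real.log (V (p.1, p.2.1, p.2.2.1) + 1)
            + (p.2.2.2.1 ^ 2 / kz + p.2.2.2.2 ^ 2 / kω) / 2) →
        (𝒱 (0, 0, 0, 0, 0) = 0 ∧
          ∀ p : ℝ × ℝ × ℝ × ℝ × ℝ, p ≠ (0, 0, 0, 0, 0) → 0 < 𝒱 p) ∧
        (∀ p : ℝ × ℝ × ℝ × ℝ × ℝ,
          Real.sqrt (p.1 ^ 2 + p.2.1 ^ 2 + p.2.2.1 ^ 2) ≤ r →
          p ≠ (0, 0, 0, 0, 0) → fderiv ℝ 𝒱 p (F p) < 0) := by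
  obtain ⟨hV0, hVpos'⟩ := hVpos
  have hquad : ∀ x y : ℝ, ![x, y] ⬝ᵥ P.mulVec ![x, y]
      = P 0 0 * (x * x) + (P 0 1 + P 1 0) * (x * y) + P 1 1 * (y * y) := by
    intro x y
    simp [Matrix.mulVec, dotProduct, Fin.sum_univ_two]
    ring
  set a := P 0 0
  set b := P 0 1
  set c := P 1 0
  set d := P 1 1
  have hVfun : V = fun q : ℝ × ℝ × ℝ =>
      (ν / 2) * (q.1 * q.1) + (ν * lam / 2 + d) * (q.2.1 * q.2.1)
        + (ν / 2 + a) * (q.2.2 * q.2.2) + (b + c) * (q.2.2 * q.2.1) := by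
    funext q
    rw [hVform q, hquad]
    ring
  have hVd : Differentiable ℝ V := hVC1.differentiable one_ne_zero
  have hVnn : ∀ q : ℝ × ℝ × ℝ, 0 ≤ V q := by
    intro q
    rcases eq_or_ne q (0, 0, 0) with h | h
    · rw [h, hV0]
    · exact (hVpos' q h).le
  have hDV : ∀ (qq vv : ℝ × ℝ × ℝ), fderiv ℝ V qq vv
      = 2 * (ν / 2) * qq.1 * vv.1
        + (2 * (ν * lam / 2 + d) * qq.2.1 + (b + c) * qq.2.2) * vv.2.1
        + (2 * (ν / 2 + a) * qq.2.2 + (b + c) * qq.2.1) * vv.2.2 := by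
    intro qq vv
    rw [hVfun]
    exact fderiv_quad_apply _ _ _ _ qq vv
  obtain ⟨E, hE⟩ : ∃ x : ℝ, x = |a| + |b| + |c| + |d| := ⟨_, rfl⟩
  obtain ⟨M, hM⟩ : ∃ x : ℝ, x = ν * (1 + lam) + 2 * E + 1 := ⟨_, rfl⟩
  have hEnn : 0 ≤ E := by rw [hE]; positivity
  have hM0 : 0 < M := by rw [hM]; nlinarith [mul_pos hν hlam, hEnn]
  have hM2 : 0 < M ^ 2 := pow_pos hM0 2
  obtain ⟨c1, hc1⟩ : ∃ x : ℝ, x = ν / (2 * kρ) := ⟨_, rfl⟩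
  have hc1pos : 0 < c1 := by rw [hc1]; positivity
  have hc1e : ν = 2 * kρ * c1 := by rw [hc1]; field_simp
  refine ⟨min (kρ / (2 * ν * r ^ 2)) (1 / (256 * M ^ 2)), lt_min (by positivity) (by positivity), ?_⟩
  intro μ hμ0 hμle 𝒱 h𝒱
  have hμ1 : μ ≤ kρ / (2 * ν * r ^ 2) := le_trans hμle (min_le_left _ _)
  have hμ2 : μ ≤ 1 / (256 * M ^ 2) := le_trans hμle (min_le_right _ _)
  have hμM2 : μ * M ^ 2 ≤ 1 / 256 := by
    have h := mul_le_mul_of_nonneg_right hμ2 (sq_nonneg M)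
    have he : 1 / (256 * M ^ 2) * M ^ 2 = 1 / 256 := by
      field_simp
    rw [he] at h
    exact h
  have h𝒱fun : 𝒱 = fun p : ℝ × ℝ × ℝ × ℝ × ℝ =>
      μ * Real.log (V (p.1, p.2.1, p.2.2.1) + 1)
        + ((kz * 2)⁻¹ * (p.2.2.2.1 * p.2.2.2.1) + (kω * 2)⁻¹ * (p.2.2.2.2 * p.2.2.2.2)) := by
    funext p
    rw [h𝒱 p]
    field_simp
  constructor
  · constructor
    · have hV0' : V 0 = 0 := hV0
      rw [h𝒱 (0, 0, 0, 0, 0)]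
      simp [hV0', hV0]
    · intro p hp
      obtain ⟨ρ, φ, α, z, w⟩ := p
      rw [h𝒱 (ρ, φ, α, z, w)]
      simp only [ne_eq, Prod.mk.injEq, not_and] at hp
      by_cases hq : (ρ, φ, α) = ((0 : ℝ), (0 : ℝ), (0 : ℝ))
      · simp only [Prod.mk.injEq] at hq
        obtain ⟨h1, h2, h3⟩ := hq
        have hzw : z ≠ 0 ∨ w ≠ 0 := by
          by_contra hcon
          push_neg at hcon
          exact (hp h1 h2 h3 hcon.1) hcon.2
        have hVval : V ((ρ, φ, α, z, w).1, (ρ, φ, α, z, w).2.1, (ρ, φ, α, z, w).2.2.1) = 0 := by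
          show V (ρ, φ, α) = 0
          rw [h1, h2, h3, hV0]
        rw [hVval]
        simp only [add_zero, zero_add, Real.log_one, mul_zero]
        have hquadpos : 0 < ((ρ, φ, α, z, w).2.2.2.1 ^ 2 / kz + (ρ, φ, α, z, w).2.2.2.2 ^ 2 / kω) / 2 := by
          show 0 < (z ^ 2 / kz + w ^ 2 / kω) / 2
          rcases hzw with hz | hw
          · have h1 := sq_pos' hz
            have h2 : (0:ℝ) ≤ w ^ 2 / kω := by positivity
            have h3 : 0 < z ^ 2 / kz := div_pos h1 hkz
            linarith
          · have h1 := sq_pos' hw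
            have h2 : (0:ℝ) ≤ z ^ 2 / kz := by positivity
            have h3 : 0 < w ^ 2 / kω := div_pos h1 hkω
            linarith
        linarith [hquadpos]
      · have hVq := hVpos' (ρ, φ, α) hq
        have hlogpos : 0 < Real.log (V (ρ, φ, α) + 1) := Real.log_pos (by linarith)
        have hquadnn : 0 ≤ (z ^ 2 / kz + w ^ 2 / kω) / 2 := by positivity
        have := mul_pos hμ0 hlogpos
        show 0 < μ * Real.log (V (ρ, φ, α) + 1) + (z ^ 2 / kz + w ^ 2 / kω) / 2
        linarith
  · intro p hball hp0
    obtain ⟨ρ, φ, α, z, w⟩ := p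
    have hball' : Real.sqrt (ρ ^ 2 + φ ^ 2 + α ^ 2) ≤ r := hball
    have hr2 : ρ ^ 2 + φ ^ 2 + α ^ 2 ≤ r ^ 2 := by
      have h0 : 0 ≤ ρ ^ 2 + φ ^ 2 + α ^ 2 := by positivity
      calc ρ ^ 2 + φ ^ 2 + α ^ 2 = Real.sqrt (ρ ^ 2 + φ ^ 2 + α ^ 2) ^ 2 := (Real.sq_sqrt h0).symm
        _ ≤ r ^ 2 := by
            apply pow_le_pow_left₀ (Real.sqrt_nonneg _) hball' 2
    have hVqnn : 0 ≤ V (ρ, φ, α) := hVnn (ρ, φ, α)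
    have hne : V (ρ, φ, α) + 1 ≠ 0 := by positivity
    have hinvpos : 0 < (V (ρ, φ, α) + 1)⁻¹ := by positivity
    have hinvle : (V (ρ, φ, α) + 1)⁻¹ ≤ 1 := by
      rw [inv_le_one_iff₀]
      right; linarith
    rw [h𝒱fun]
    have hDeq := fderiv_lyap_apply μ ((kz * 2)⁻¹) ((kω * 2)⁻¹) V (ρ, φ, α, z, w)
      (F (ρ, φ, α, z, w)) (hVd _) hne
    obtain ⟨u, hu⟩ : ∃ x : ℝ, x = μ * (V (ρ, φ, α) + 1)⁻¹ := ⟨_, rfl⟩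
    have hu_pos : 0 < u := by rw [hu]; exact mul_pos hμ0 hinvpos
    have hu_le : u ≤ μ := by
      rw [hu]
      calc μ * (V (ρ, φ, α) + 1)⁻¹ ≤ μ * 1 := mul_le_mul_of_nonneg_left hinvle hμ0.le
        _ = μ := mul_one μ
    -- the value of the derivative
    have hsplit : fderiv ℝ V (ρ, φ, α)
        (-kρ * Real.cos α ^ 2 * ρ + ρ * Real.cos α * z,
         -kρ * _root_.sinc (2 * α) * α + Real.sin α * z,
         -kα * α + lam * kρ * _root_.sinc (2 * α) * φ - Real.sin α * z + w)
        = fderiv ℝ V (ρ, φ, α) (f (ρ, φ, α))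
          + (ν * ρ * (ρ * Real.cos α * z)
            + (ν * lam * φ + 2 * d * φ + (b + c) * α) * (Real.sin α * z)
            + (ν * α + 2 * a * α + (b + c) * φ) * (-(Real.sin α * z) + w)) := by
      rw [hDV, hDV, hf]
      dsimp only
      ring
    have hval : fderiv ℝ (fun p : ℝ × ℝ × ℝ × ℝ × ℝ =>
        μ * Real.log (V (p.1, p.2.1, p.2.2.1) + 1)
          + ((kz * 2)⁻¹ * (p.2.2.2.1 * p.2.2.2.1) + (kω * 2)⁻¹ * (p.2.2.2.2 * p.2.2.2.2)))
        (ρ, φ, α, z, w) (F (ρ, φ, α, z, w))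
        = u * fderiv ℝ V (ρ, φ, α) (f (ρ, φ, α))
          + (u * (ν * ρ * (ρ * Real.cos α * z))
            + u * ((ν * lam * φ + 2 * d * φ + (b + c) * α) * (Real.sin α * z)
              + (ν * α + 2 * a * α + (b + c) * φ) * (-(Real.sin α * z) + w)))
          - z ^ 2 - w ^ 2 := by
      rw [hDeq, hF (ρ, φ, α, z, w)]
      dsimp only
      rw [hsplit, hu]
      field_simp
      ring
    rw [hval]
    -- bounds
    have hDVf : fderiv ℝ V (ρ, φ, α) (f (ρ, φ, α))
        ≤ -ν * kρ * Real.cos α ^ 2 * ρ ^ 2 - (α ^ 2 + φ ^ 2) / 2 := hVderiv (ρ, φ, α) hball'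
    have hA' := mul_le_mul_of_nonneg_left hDVf hu_pos.le
    -- B term
    have hρr : ρ ^ 2 ≤ r ^ 2 := by linarith only [sq_nonneg φ, sq_nonneg α, hr2]
    have hB1 : 2 * kρ * c1 * ρ * (ρ * Real.cos α * z)
        ≤ 2 * kρ * c1 * kρ * Real.cos α ^ 2 * ρ ^ 2 / 2 + c1 * (ρ ^ 2 * z ^ 2) := by
      linarith only [mul_nonneg (mul_nonneg hc1pos.le (sq_nonneg ρ)) (sq_nonneg (kρ * Real.cos α - z))]
    have hB1' : ν * ρ * (ρ * Real.cos α * z)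
        ≤ ν * kρ * Real.cos α ^ 2 * ρ ^ 2 / 2 + c1 * (ρ ^ 2 * z ^ 2) := by
      rw [hc1e]
      linarith only [hB1]
    have hB2 := mul_le_mul_of_nonneg_left hB1' hu_pos.le
    have hzterm : u * (c1 * (ρ ^ 2 * z ^ 2)) ≤ z ^ 2 / 4 := by
      have e1 : u * (c1 * (ρ ^ 2 * z ^ 2)) ≤ μ * (c1 * (ρ ^ 2 * z ^ 2)) := by
        linarith only [mul_nonneg (sub_nonneg.mpr hu_le)
          (mul_nonneg (mul_nonneg hc1pos.le (sq_nonneg ρ)) (sq_nonneg z))]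
      have e2 : μ * (c1 * (ρ ^ 2 * z ^ 2)) ≤ μ * c1 * r ^ 2 * z ^ 2 := by
        linarith only [mul_nonneg (mul_nonneg (mul_nonneg hμ0.le hc1pos.le) (sq_nonneg z))
          (sub_nonneg.mpr hρr)]
      have e3 : μ * c1 * r ^ 2 ≤ 1 / 4 := by
        have hid : kρ / (2 * ν * r ^ 2) * c1 * r ^ 2 = 1 / 4 := by
          rw [hc1]; field_simp; ring
        linarith only [hid,
          mul_nonneg (mul_nonneg (sub_nonneg.mpr hμ1) hc1pos.le) (sq_nonneg r)]
      have e4 : μ * c1 * r ^ 2 * z ^ 2 ≤ 1 / 4 * z ^ 2 :=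
        mul_le_mul_of_nonneg_right e3 (sq_nonneg z)
      linarith
    -- C term (φ, α cross terms)
    have hsin : |Real.sin α| ≤ 1 := abs_le.mpr ⟨Real.neg_one_le_sin α, Real.sin_le_one α⟩
    obtain ⟨S, hS⟩ : ∃ x : ℝ, x = |α| + |φ| := ⟨_, rfl⟩
    obtain ⟨T, hT⟩ : ∃ x : ℝ, x = |z| + |w| := ⟨_, rfl⟩
    have hSnn : 0 ≤ S := by rw [hS]; positivity
    have hTnn : 0 ≤ T := by rw [hT]; positivity
    have hcφ : |ν * lam * φ + 2 * d * φ + (b + c) * α| ≤ M * S := by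
      have h1 : |ν * lam * φ + 2 * d * φ + (b + c) * α|
          ≤ |ν * lam * φ| + |2 * d * φ| + |(b + c) * α| := abs_add_three _ _ _
      have b1 : |ν * lam * φ| = ν * lam * |φ| := by
        rw [abs_mul, abs_of_pos (mul_pos hν hlam)]
      have b2 : |2 * d * φ| ≤ 2 * |d| * |φ| := by
        rw [abs_mul]
        apply mul_le_mul_of_nonneg_right _ (abs_nonneg φ)
        rw [abs_mul]
        simp
      have b3 : |(b + c) * α| ≤ (|b| + |c|) * |α| := by
        rw [abs_mul]
        exact mul_le_mul_of_nonneg_right (abs_add_le _ _) (abs_nonneg α)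
      have h5 : ν * lam + 2 * |d| ≤ M := by
        rw [hM, hE]
        linarith only [abs_nonneg a, abs_nonneg b, abs_nonneg c, hν.le]
      have h6 : |b| + |c| ≤ M := by
        rw [hM, hE]
        linarith only [abs_nonneg a, abs_nonneg b, abs_nonneg c, abs_nonneg d,
          (mul_pos hν hlam).le, hν.le]
      have k5 := mul_le_mul_of_nonneg_right h5 (abs_nonneg φ)
      have k6 := mul_le_mul_of_nonneg_right h6 (abs_nonneg α)
      rw [hS]
      linarith only [h1, b1, b2, b3, k5, k6]
    have hcα : |ν * α + 2 * a * α + (b + c) * φ| ≤ M * S := by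
      have h1 : |ν * α + 2 * a * α + (b + c) * φ|
          ≤ |ν * α| + |2 * a * α| + |(b + c) * φ| := abs_add_three _ _ _
      have b1 : |ν * α| = ν * |α| := by
        rw [abs_mul, abs_of_pos hν]
      have b2 : |2 * a * α| ≤ 2 * |a| * |α| := by
        rw [abs_mul]
        apply mul_le_mul_of_nonneg_right _ (abs_nonneg α)
        rw [abs_mul]
        simp
      have b3 : |(b + c) * φ| ≤ (|b| + |c|) * |φ| := by
        rw [abs_mul]
        exact mul_le_mul_of_nonneg_right (abs_add_le _ _) (abs_nonneg φ)
      have h5 : ν + 2 * |a| ≤ M := by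
        rw [hM, hE]
        linarith only [abs_nonneg a, abs_nonneg b, abs_nonneg c, abs_nonneg d,
          (mul_pos hν hlam).le]
      have h6 : |b| + |c| ≤ M := by
        rw [hM, hE]
        linarith only [abs_nonneg a, abs_nonneg b, abs_nonneg c, abs_nonneg d,
          (mul_pos hν hlam).le, hν.le]
      have k5 := mul_le_mul_of_nonneg_right h5 (abs_nonneg α)
      have k6 := mul_le_mul_of_nonneg_right h6 (abs_nonneg φ)
      rw [hS]
      linarith only [h1, b1, b2, b3, k5, k6]
    have l1 : (ν * lam * φ + 2 * d * φ + (b + c) * α) * (Real.sin α * z) ≤ M * S * |z| := by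
      calc (ν * lam * φ + 2 * d * φ + (b + c) * α) * (Real.sin α * z)
          ≤ |(ν * lam * φ + 2 * d * φ + (b + c) * α) * (Real.sin α * z)| := le_abs_self _
        _ = |ν * lam * φ + 2 * d * φ + (b + c) * α| * (|Real.sin α| * |z|) := by
            rw [abs_mul, abs_mul]
        _ ≤ M * S * |z| := by
            have m1 : |ν * lam * φ + 2 * d * φ + (b + c) * α| * (|Real.sin α| * |z|)
                ≤ |ν * lam * φ + 2 * d * φ + (b + c) * α| * |z| :=
              mul_le_mul_of_nonneg_left
                (mul_le_of_le_one_left (abs_nonneg z) hsin) (abs_nonneg _)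
            have m2 := mul_le_mul_of_nonneg_right hcφ (abs_nonneg z)
            linarith only [m1, m2]
    have l2 : (ν * α + 2 * a * α + (b + c) * φ) * (-(Real.sin α * z) + w) ≤ M * S * T := by
      have hb : |-(Real.sin α * z) + w| ≤ T := by
        calc |-(Real.sin α * z) + w| ≤ |-(Real.sin α * z)| + |w| := abs_add_le _ _
          _ = |Real.sin α| * |z| + |w| := by rw [abs_neg, abs_mul]
          _ ≤ T := by
              have m1 : |Real.sin α| * |z| ≤ |z| :=
                mul_le_of_le_one_left (abs_nonneg z) hsin
              rw [hT]
              linarith only [m1]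
      calc (ν * α + 2 * a * α + (b + c) * φ) * (-(Real.sin α * z) + w)
          ≤ |(ν * α + 2 * a * α + (b + c) * φ) * (-(Real.sin α * z) + w)| := le_abs_self _
        _ = |ν * α + 2 * a * α + (b + c) * φ| * |-(Real.sin α * z) + w| := abs_mul _ _
        _ ≤ M * S * T :=
            mul_le_mul hcα hb (abs_nonneg _) (mul_nonneg hM0.le hSnn)
    have hCross : (ν * lam * φ + 2 * d * φ + (b + c) * α) * (Real.sin α * z)
        + (ν * α + 2 * a * α + (b + c) * φ) * (-(Real.sin α * z) + w) ≤ 2 * M * S * T := by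
      have : M * S * |z| ≤ M * S * T := by
        apply mul_le_mul_of_nonneg_left _ (mul_nonneg hM0.le hSnn)
        rw [hT]; linarith only [abs_nonneg w]
      linarith only [l1, l2, this]
    have hAM : 2 * M * S * T ≤ S ^ 2 / 16 + 16 * (M ^ 2 * T ^ 2) := by
      linarith only [sq_nonneg (S / 4 - 4 * M * T)]
    have hS2 : S ^ 2 ≤ 2 * (α ^ 2 + φ ^ 2) := by
      rw [hS]
      linarith only [sq_nonneg (|α| - |φ|), sq_abs α, sq_abs φ]
    have hT2 : T ^ 2 ≤ 2 * (z ^ 2 + w ^ 2) := by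
      rw [hT]
      linarith only [sq_nonneg (|z| - |w|), sq_abs z, sq_abs w]
    have hCB : (ν * lam * φ + 2 * d * φ + (b + c) * α) * (Real.sin α * z)
        + (ν * α + 2 * a * α + (b + c) * φ) * (-(Real.sin α * z) + w)
        ≤ (α ^ 2 + φ ^ 2) / 8 + 32 * M ^ 2 * (z ^ 2 + w ^ 2) := by
      linarith only [hCross, hAM, hS2, mul_nonneg (sq_nonneg M) (sub_nonneg.mpr hT2)]
    have hC2 := mul_le_mul_of_nonneg_left hCB hu_pos.le
    have hC3 : u * (32 * M ^ 2 * (z ^ 2 + w ^ 2)) ≤ (z ^ 2 + w ^ 2) / 8 := by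
      have e1 : u * (32 * M ^ 2 * (z ^ 2 + w ^ 2)) ≤ μ * (32 * M ^ 2 * (z ^ 2 + w ^ 2)) := by
        linarith only [mul_nonneg (sub_nonneg.mpr hu_le)
          (mul_nonneg (mul_nonneg (by norm_num : (0:ℝ) ≤ 32) (sq_nonneg M))
            (add_nonneg (sq_nonneg z) (sq_nonneg w)))]
      have e2 : μ * (32 * M ^ 2 * (z ^ 2 + w ^ 2)) ≤ 32 * (1 / 256) * (z ^ 2 + w ^ 2) := by
        linarith only [mul_le_mul_of_nonneg_right hμM2
          (by positivity : (0:ℝ) ≤ 32 * (z ^ 2 + w ^ 2))]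
      linarith only [e1, e2]
    have hC4 : u * ((α ^ 2 + φ ^ 2) / 8) ≤ u * ((α ^ 2 + φ ^ 2) / 4) := by
      linarith only [mul_nonneg hu_pos.le (add_nonneg (sq_nonneg α) (sq_nonneg φ))]
    -- strict positivity of leftover
    have hXnn : 0 ≤ u * (ν * kρ * Real.cos α ^ 2 * ρ ^ 2) :=
      mul_nonneg hu_pos.le (by positivity)
    have hYnn : 0 ≤ u * ((α ^ 2 + φ ^ 2) / 4) :=
      mul_nonneg hu_pos.le (by positivity)
    have hstrict : 0 < u * (ν * kρ * Real.cos α ^ 2 * ρ ^ 2) / 2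
        + u * ((α ^ 2 + φ ^ 2) / 4) + z ^ 2 / 2 + 3 / 4 * w ^ 2 := by
      rcases eq_or_ne z 0 with hz | hz
      · rcases eq_or_ne w 0 with hw | hw
        · rcases eq_or_ne α 0 with hα | hα
          · rcases eq_or_ne φ 0 with hφ | hφ
            · have hρ : ρ ≠ 0 := by
                intro h
                exact hp0 (by rw [h, hφ, hα, hz, hw])
              have hcos : Real.cos α = 1 := by rw [hα, Real.cos_zero]
              have hpos : 0 < u * (ν * kρ * Real.cos α ^ 2 * ρ ^ 2) := by
                rw [hcos]
                have h9 : (0:ℝ) < ν * kρ * 1 ^ 2 * ρ ^ 2 := by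
                  have h8 := mul_pos (mul_pos hν hkρ) (sq_pos' hρ)
                  linarith only [h8]
                exact mul_pos hu_pos h9
              linarith only [hpos, hYnn, sq_nonneg z, sq_nonneg w]
            · have hpos : 0 < u * ((α ^ 2 + φ ^ 2) / 4) := by
                apply mul_pos hu_pos
                have h9 := sq_pos' hφ
                linarith only [h9, sq_nonneg α]
              linarith only [hpos, hXnn, sq_nonneg z, sq_nonneg w]
          · have hpos : 0 < u * ((α ^ 2 + φ ^ 2) / 4) := by
              apply mul_pos hu_pos
              have h9 := sq_pos' hα
              linarith only [h9, sq_nonneg φ]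
            linarith only [hpos, hXnn, sq_nonneg z, sq_nonneg w]
        · have h9 := sq_pos' hw
          linarith only [h9, hXnn, hYnn, sq_nonneg z]
      · have h9 := sq_pos' hz
        linarith only [h9, hXnn, hYnn, sq_nonneg w]
    linarith only [hA', hB2, hzterm, hC2, hC3, hC4, hstrict, hXnn, hYnn, sq_nonneg z, sq_nonneg w]
end

section
/- Integrator backstepping of control barrier functions for cascaded systems: Let n, m ≥ 1, let h : ℝⁿ → ℝ be continuously differentiable with int C := {x₁ ∈ ℝⁿ : h(x₁) > 0}, let f : ℝⁿ → ℝⁿ and g : ℝⁿ → ℝ^{n×m} be locally Lipschitz, let B₁ : int C → ℝ be differentiable with B₁(x₁) > 0 on int C and B₁(x₁) → +∞ along any sequence in int C converging to a point with h = 0. Let x₂* : ℝⁿ → ℝᵐ be continuously differentiable and α_B a class-K function such that for all x₁ ∈ int C, ∇B₁(x₁) · (f(x₁) + g(x₁) x₂*(x₁)) < α_B(1/B₁(x₁)). Let H be a symmetric positive definite m×m matrix and define, in the coordinates 𝐱 = (x₁, x̃₂) with x̃₂ := x₂ − x₂*(x₁), the function B(𝐱) := B₁(x₁) + x̃₂ᵀ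 H x̃₂, and the drift F(𝐱) := (f(x₁) + g(x₁)(x₂*(x₁) + x̃₂), 0) with input matrix G = (0, I_m)ᵀ. Then B is a reciprocal control barrier function for the cascaded system ẋ₁ = f(x₁) + g(x₁)x₂, ẋ₂ = u on int C × ℝᵐ: (i) B(𝐱) > 0 for all x₁ ∈ int C; (ii) B(𝐱) → +∞ along any sequence whose x₁-component approaches {h = 0}; and (iii) for every 𝐱 with x₁ ∈ int C, if the derivative of B in the input directions vanishes, i.e. 2x̃₂ᵀH = 0 (equivalently x̃₂ = 0), then ∇B(𝐱) · F(𝐱) − α_B(1/B(𝐱)) < 0. -/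
open Real Matrix Filter

/-- Integrator backstepping of reciprocal control barrier functions for
cascaded systems `ẋ₁ = f(x₁) + g(x₁)x₂`, `ẋ₂ = u`: if `B₁` is a reciprocal CBF
for the `x₁`-subsystem certified by a continuously differentiable virtual
controller `x₂*` and a class-K function `α_B`, then in the coordinates
`𝐱 = (x₁, xt₂)` with `xt₂ = x₂ - x₂*(x₁)`, the function
`B(𝐱) = B₁(x₁) + xt₂ᵀHxt₂` (with `H` symmetric positive definite) is a
reciprocal CBF for the cascade on `int C × ℝᵐ`. -/
theorem backstepping_CBF
    (n m : ℕ) (hn : 1 ≤ n) (hm : 1 ≤ m)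
    -- admissible set data
    (h : (Fin n → ℝ) → ℝ) (hh : ContDiff ℝ 1 h)
    -- dynamics
    (f : (Fin n → ℝ) → (Fin n → ℝ))
    (g : (Fin n → ℝ) → Matrix (Fin n) (Fin m) ℝ)
    (hf : LocallyLipschitz f)
    (hg : LocallyLipschitz (fun (x₁ : Fin n → ℝ) (i : Fin n) (j : Fin m) => g x₁ i j))
    -- the CBF of the x₁-subsystem
    (B₁ : (Fin n → ℝ) → ℝ)
    (hB₁diff : ∀ x₁ : Fin n → ℝ, 0 < h x₁ → DifferentiableAt ℝ B₁ x₁)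
    (hB₁pos : ∀ x₁ : Fin n → ℝ, 0 < h x₁ → 0 < B₁ x₁)
    (hB₁inf : ∀ u : ℕ → (Fin n → ℝ), (∀ k, 0 < h (u k)) →
      (∃ x₀ : Fin n → ℝ, Tendsto u atTop (nhds x₀) ∧ h x₀ = 0) →
      Tendsto (fun k => B₁ (u k)) atTop atTop)
    -- the virtual controller and the class-K function
    (x₂star : (Fin n → ℝ) → (Fin m → ℝ)) (hx₂star : ContDiff ℝ 1 x₂star)
    (αB : ℝ → ℝ) (hαBcont : ContinuousOn αB (Set.Ici 0))
    (hαBmono : StrictMonoOn αB (Set.Ici 0)) (hαB0 : αB 0 = 0)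
    (hαBnonneg : ∀ s : ℝ, 0 ≤ s → 0 ≤ αB s)
    -- the virtual safety condition ∇B₁·(f + g x₂*) < α_B(1/B₁) on int C
    (hsafe : ∀ x₁ : Fin n → ℝ, 0 < h x₁ →
      fderiv ℝ B₁ x₁ (f x₁ + (g x₁).mulVec (x₂star x₁)) < αB (1 / B₁ x₁))
    -- the backstepped candidate CBF and the cascade drift
    (H : Matrix (Fin m) (Fin m) ℝ) (hHsymm : H.IsSymm) (hHpos : H.PosDef)
    (B : (Fin n → ℝ) × (Fin m → ℝ) → ℝ)
    (hB : ∀ (x₁ : Fin n → ℝ) (xt₂ : Fin m → ℝ),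
      B (x₁, xt₂) = B₁ x₁ + xt₂ ⬝ᵥ H.mulVec xt₂)
    (F : (Fin n → ℝ) × (Fin m → ℝ) → (Fin n → ℝ) × (Fin m → ℝ))
    (hF : ∀ (x₁ : Fin n → ℝ) (xt₂ : Fin m → ℝ),
      F (x₁, xt₂) = (f x₁ + (g x₁).mulVec (x₂star x₁ + xt₂), 0)) :
    -- (i) positivity on int C × ℝᵐ
    (∀ (x₁ : Fin n → ℝ) (xt₂ : Fin m → ℝ), 0 < h x₁ → 0 < B (x₁, xt₂)) ∧
    -- (ii) blow-up along sequences approaching the boundary {h = 0}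
    (∀ u : ℕ → (Fin n → ℝ) × (Fin m → ℝ), (∀ k, 0 < h (u k).1) →
      (∃ x₀ : Fin n → ℝ, Tendsto (fun k => (u k).1) atTop (nhds x₀) ∧ h x₀ = 0) →
      Tendsto (fun k => B (u k)) atTop atTop) ∧
    -- (iii) the CBF inequality where the input directions vanish
    (∀ (x₁ : Fin n → ℝ) (xt₂ : Fin m → ℝ), 0 < h x₁ → xt₂ = 0 →
      fderiv ℝ B (x₁, xt₂) (F (x₁, xt₂)) - αB (1 / B (x₁, xt₂)) < 0) := by

  have hQnonneg : ∀ y : Fin m → ℝ, 0 ≤ y ⬝ᵥ H.mulVec y := fun y => by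
    simpa using hHpos.posSemidef.dotProduct_mulVec_nonneg y
  refine ⟨?_, ?_, ?_⟩
  · intro x₁ xt₂ hx
    rw [hB]
    exact add_pos_of_pos_of_nonneg (hB₁pos x₁ hx) (hQnonneg xt₂)
  · intro u hu hconv
    have h1 := hB₁inf (fun k => (u k).1) hu hconv
    refine tendsto_atTop_mono (fun k => ?_) h1
    have : B (u k) = B₁ (u k).1 + (u k).2 ⬝ᵥ H.mulVec (u k).2 := by
      rw [← hB (u k).1 (u k).2]
    rw [this]
    exact le_add_of_nonneg_right (hQnonneg _)
  · intro x₁ xt₂ hx hxt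
    subst hxt
    have hBfun : B = fun p => B₁ p.1 + p.2 ⬝ᵥ H.mulVec p.2 := by
      funext p
      obtain ⟨p1, p2⟩ := p
      exact hB p1 p2
    -- derivative of the quadratic form at 0 is 0
    have hQ : HasFDerivAt (fun y : Fin m → ℝ => y ⬝ᵥ H.mulVec y)
        (0 : (Fin m → ℝ) →L[ℝ] ℝ) 0 := by
      have hterm : ∀ i : Fin m, HasFDerivAt
          (fun y : Fin m → ℝ => y i * (H.mulVec y) i)
          (0 : (Fin m → ℝ) →L[ℝ] ℝ) 0 := by
        intro i
        have hc := hasFDerivAt_apply (𝕜 := ℝ) (F' := fun _ : Fin m => ℝ) i 0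
        have hL : HasFDerivAt (fun y : Fin m → ℝ => (H.mulVec y) i)
            ((ContinuousLinearMap.proj i).comp
              (LinearMap.toContinuousLinearMap H.mulVecLin)) 0 :=
          ((ContinuousLinearMap.proj i).comp
              (LinearMap.toContinuousLinearMap H.mulVecLin)).hasFDerivAt
        have := hc.fun_mul hL
        simpa [Matrix.mulVec_zero] using this
      have hsum := HasFDerivAt.fun_sum (fun i (_ : i ∈ Finset.univ) => hterm i)
      simpa [dotProduct] using hsum
    have h1 : HasFDerivAt (fun p : (Fin n → ℝ) × (Fin m → ℝ) => B₁ p.1)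
        ((fderiv ℝ B₁ x₁).comp
          (ContinuousLinearMap.fst ℝ (Fin n → ℝ) (Fin m → ℝ))) (x₁, 0) :=
      ((hB₁diff x₁ hx).hasFDerivAt).comp _ hasFDerivAt_fst
    have h2 : HasFDerivAt
        (fun p : (Fin n → ℝ) × (Fin m → ℝ) => p.2 ⬝ᵥ H.mulVec p.2)
        (ContinuousLinearMap.comp (0 : (Fin m → ℝ) →L[ℝ] ℝ)
          (ContinuousLinearMap.snd ℝ (Fin n → ℝ) (Fin m → ℝ)))
        ((x₁, 0) : (Fin n → ℝ) × (Fin m → ℝ)) :=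
      hQ.comp (f := Prod.snd) ((x₁, 0) : (Fin n → ℝ) × (Fin m → ℝ)) hasFDerivAt_snd
    have hBd : HasFDerivAt B
        (((fderiv ℝ B₁ x₁).comp
          (ContinuousLinearMap.fst ℝ (Fin n → ℝ) (Fin m → ℝ))) +
         (ContinuousLinearMap.comp (0 : (Fin m → ℝ) →L[ℝ] ℝ)
          (ContinuousLinearMap.snd ℝ (Fin n → ℝ) (Fin m → ℝ)))) (x₁, 0) := by
      rw [hBfun]; exact h1.add h2
    rw [hBd.fderiv, hF, hB]
    have := hsafe x₁ hx
    simp only [ContinuousLinearMap.add_apply, ContinuousLinearMap.coe_comp',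
      Function.comp_apply, ContinuousLinearMap.coe_fst',
      ContinuousLinearMap.coe_snd', ContinuousLinearMap.zero_apply, add_zero,
      Matrix.mulVec_zero, dotProduct_zero, zero_dotProduct] at *
    linarith
end

section
/- Let h : ℝ² → ℝ be continuously differentiable, int C := {(x, y) : h(x, y) > 0}, let H be a symmetric positive definite 2×2 matrix, and define B(x, y, v, ω) := 1/h(x, y) + (v, ω)ᵀ H (v, ω). Consider the force-controlled unicycle with state (x, y, θ, v, ω) and inputs (u₁, u₂): drift F(x, y, θ, v, ω) = (v cos θ, v sin θ, ω, 0, 0) and input matrix G with columns (0, 0, 0, 1, 0)ᵀ and (0, 0, 0, 0, 1)ᵀ. Then B is a reciprocal control barrier function for this system: (i) B > 0 whenever (x, y) ∈ int C; (ii) B → +∞ along any sequence of states whose (x, y)-component satisfies h(xₙ, yₙ) → 0; and (iii) for every class-K function α_B and every state with (x, y) ∈ int C, if the derivative of B in the input directions vanishes, i.e. 2(v, ω)ᵀH = 0 (equivalently (v, ω) = (0, 0)), then ∇B · F − α_B(1/B) < 0. -/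
open Real Matrix Filter

/-- For the force-controlled unicycle `ẋ = v cos θ, ẏ = v sin θ, θ̇ = ω,
v̇ = u₁, ω̇ = u₂`, the backstepped function
`B(x, y, v, ω) = 1/h(x, y) + (v, ω)ᵀH(v, ω)` (with `H` symmetric positive
definite) is a reciprocal control barrier function with respect to
`C = {h ≥ 0}`: it is positive when `h(x,y) > 0`, blows up along sequences of
states whose `(x,y)`-component approaches `{h = 0}`, and wherever the
derivative of `B` in the input directions vanishes, i.e. `(v, ω) = (0, 0)`,
one has `∇B · F − α_B(1/B) < 0` for every class-K function `α_B`.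
Coordinates: `p = (x, y, θ, v, ω)`. -/
theorem unicycle_dynamic_CBF
    (h : ℝ × ℝ → ℝ) (hh : ContDiff ℝ 1 h)
    (H : Matrix (Fin 2) (Fin 2) ℝ) (hHsymm : H.IsSymm) (hHpos : H.PosDef)
    (B : ℝ × ℝ × ℝ × ℝ × ℝ → ℝ)
    (hB : ∀ p : ℝ × ℝ × ℝ × ℝ × ℝ,
      B p = 1 / h (p.1, p.2.1)
        + ![p.2.2.2.1, p.2.2.2.2] ⬝ᵥ H.mulVec ![p.2.2.2.1, p.2.2.2.2])
    (F : ℝ × ℝ × ℝ × ℝ × ℝ → ℝ × ℝ × ℝ × ℝ × ℝ)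
    (hF : ∀ p : ℝ × ℝ × ℝ × ℝ × ℝ,
      F p = (p.2.2.2.1 * Real.cos p.2.2.1, p.2.2.2.1 * Real.sin p.2.2.1,
             p.2.2.2.2, 0, 0)) :
    -- (i) positivity whenever (x, y) ∈ int C
    (∀ p : ℝ × ℝ × ℝ × ℝ × ℝ, 0 < h (p.1, p.2.1) → 0 < B p) ∧
    -- (ii) blow-up along sequences whose (x, y)-component satisfies h → 0
    (∀ u : ℕ → ℝ × ℝ × ℝ × ℝ × ℝ, (∀ k, 0 < h ((u k).1, (u k).2.1)) →
      Tendsto (fun k => h ((u k).1, (u k).2.1)) atTop (nhds 0) →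
      Tendsto (fun k => B (u k)) atTop atTop) ∧
    -- (iii) the CBF inequality where the input directions vanish
    (∀ αB : ℝ → ℝ, ContinuousOn αB (Set.Ici 0) → StrictMonoOn αB (Set.Ici 0) →
      αB 0 = 0 → (∀ s : ℝ, 0 ≤ s → 0 ≤ αB s) →
      ∀ p : ℝ × ℝ × ℝ × ℝ × ℝ, 0 < h (p.1, p.2.1) →
        p.2.2.2.1 = 0 → p.2.2.2.2 = 0 →
        fderiv ℝ B p (F p) - αB (1 / B p) < 0) := by
  have hquad : ∀ v w : ℝ, 0 ≤ ![v, w] ⬝ᵥ H.mulVec ![v, w] := by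
    intro v w
    have := hHpos.posSemidef.dotProduct_mulVec_nonneg ![v, w]
    simpa using this
  refine ⟨?_, ?_, ?_⟩
  · intro p hp
    rw [hB p]
    have h1 : 0 < 1 / h (p.1, p.2.1) := by positivity
    linarith [hquad p.2.2.2.1 p.2.2.2.2]
  · intro u hpos htend
    have h1 : Tendsto (fun k => 1 / h ((u k).1, (u k).2.1)) atTop atTop := by
      have : Tendsto (fun k => h ((u k).1, (u k).2.1)) atTop (nhdsWithin 0 (Set.Ioi 0)) :=
        tendsto_nhdsWithin_iff.mpr ⟨htend, Filter.Eventually.of_forall fun k => hpos k⟩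
      simpa [one_div, Pi.inv_def] using this.inv_tendsto_nhdsGT_zero
    refine tendsto_atTop_mono (fun k => ?_) h1
    rw [hB (u k)]
    linarith [hquad (u k).2.2.2.1 (u k).2.2.2.2]
  · intro αB hcont hmono h0 hnn p hp hv hw
    have hFp : F p = 0 := by
      rw [hF p, hv, hw]; simp [Prod.ext_iff]
    rw [hFp, map_zero]
    have hBp : B p = 1 / h (p.1, p.2.1) := by
      rw [hB p, hv, hw]
      simp [dotProduct]
    have hBpos : 0 < B p := by rw [hBp]; positivity
    have hinv : 1 / B p = h (p.1, p.2.1) := by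
      rw [hBp]; field_simp
    have : 0 < αB (1 / B p) := by
      rw [hinv, ← h0]
      exact hmono (Set.mem_Ici.mpr le_rfl) (Set.mem_Ici.mpr (le_of_lt hp)) hp
    linarith
end
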